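/- arXiv:2004.07895 — 10 statements merged into one kernel-verified Lean document; each statement's English description precedes it below -/
import Mathlib

section
/- Let μ : [0,∞) → ℝ be continuous on [0,∞) and continuously differentiable on (0,∞) with μ(ρ) > 0 and μ'(ρ) > 0 for every ρ > 0, satisfying the vacuum condition with exponent α ∈ (2/3, 4] and either the large-density condition with exponent β ∈ (1,4) or μ(ρ) = ρ for all ρ ≥ M₀ for some M₀ > 0. Let a > 0 and γ ≥ 1, and assume that either α < 1, or γ < α, or there exist c₀ > 0 and ρ* > 0 with μ(ρ) ≥ c₀ρ for all ρ ∈ (0, ρ*). Then there exists a constant C > 0 such that for every ρ > 0: μ(ρ)/ρ + a γ ρ^{γ−1}/μ'(ρ) ≥ C. -/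
open Filter

lemma stmt3_aux_anti (μ : ℝ → ℝ) (hC1 : ContDiffOn ℝ 1 μ (Set.Ioi 0))
    (hpos : ∀ ρ > (0:ℝ), 0 < μ ρ) (c s t : ℝ) (hs : 0 < s) (hst : s ≤ t)
    (h : ∀ ρ ∈ Set.Icc s t, ρ * deriv μ ρ / μ ρ ≤ c) :
    μ t / t ^ c ≤ μ s / s ^ c := by
  have ht : 0 < t := hs.trans_le hst
  have hsub : Set.Icc s t ⊆ Set.Ioi 0 := fun x hx => hs.trans_le hx.1
  have hdiff : ∀ ρ ∈ Set.Ioi (0:ℝ), DifferentiableAt ℝ μ ρ := fun ρ hρ =>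
    ((hC1.differentiableOn one_ne_zero) ρ hρ).differentiableAt (isOpen_Ioi.mem_nhds hρ)
  set g : ℝ → ℝ := fun ρ => Real.log (μ ρ) - c * Real.log ρ with hg
  have hder : ∀ ρ ∈ Set.Ioo s t, HasDerivAt g (deriv μ ρ / μ ρ - c * ρ⁻¹) ρ := by
    intro ρ hρ
    have hρ0 : 0 < ρ := hs.trans hρ.1
    have h1 := (hdiff ρ hρ0).hasDerivAt
    have h2 := h1.log (hpos ρ hρ0).ne'
    have h3 := (Real.hasDerivAt_log hρ0.ne').const_mul c
    exact h2.sub h3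
  have hganti : AntitoneOn g (Set.Icc s t) := by
    apply antitoneOn_of_deriv_nonpos (convex_Icc s t)
    · apply ContinuousOn.sub
      · exact ContinuousOn.log (hC1.continuousOn.mono hsub)
          (fun ρ hρ => (hpos ρ (hsub hρ)).ne')
      · exact continuousOn_const.mul (Real.continuousOn_log.mono
          (fun x hx => ne_of_gt (hsub hx)))
    · rw [interior_Icc]
      exact fun ρ hρ => (hder ρ hρ).differentiableAt.differentiableWithinAt
    · rw [interior_Icc]
      intro ρ hρ
      have hρ0 : 0 < ρ := hs.trans hρ.1
      have hμ : 0 < μ ρ := hpos ρ hρ0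
      rw [(hder ρ hρ).deriv, sub_nonpos, ← div_eq_mul_inv]
      rw [div_le_div_iff₀ hμ hρ0]
      nlinarith [(div_le_iff₀ hμ).1 (h ρ ⟨hρ.1.le, hρ.2.le⟩)]
  have hgle : g t ≤ g s := hganti ⟨le_rfl, hst⟩ ⟨hst, le_rfl⟩ hst
  have h1 : Real.log (μ t / t ^ c) ≤ Real.log (μ s / s ^ c) := by
    rw [Real.log_div (hpos t ht).ne' (Real.rpow_pos_of_pos ht c).ne',
        Real.log_div (hpos s hs).ne' (Real.rpow_pos_of_pos hs c).ne',
        Real.log_rpow ht, Real.log_rpow hs]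
    simpa [hg] using hgle
  have := Real.exp_le_exp.2 h1
  rwa [Real.exp_log (div_pos (hpos t ht) (Real.rpow_pos_of_pos ht c)),
    Real.exp_log (div_pos (hpos s hs) (Real.rpow_pos_of_pos hs c))] at this

lemma stmt3_aux_mono (μ : ℝ → ℝ) (hC1 : ContDiffOn ℝ 1 μ (Set.Ioi 0))
    (hpos : ∀ ρ > (0:ℝ), 0 < μ ρ) (c s t : ℝ) (hs : 0 < s) (hst : s ≤ t)
    (h : ∀ ρ ∈ Set.Icc s t, c ≤ ρ * deriv μ ρ / μ ρ) :
    μ s / s ^ c ≤ μ t / t ^ c := by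
  have ht : 0 < t := hs.trans_le hst
  have hsub : Set.Icc s t ⊆ Set.Ioi 0 := fun x hx => hs.trans_le hx.1
  have hdiff : ∀ ρ ∈ Set.Ioi (0:ℝ), DifferentiableAt ℝ μ ρ := fun ρ hρ =>
    ((hC1.differentiableOn one_ne_zero) ρ hρ).differentiableAt (isOpen_Ioi.mem_nhds hρ)
  set g : ℝ → ℝ := fun ρ => Real.log (μ ρ) - c * Real.log ρ with hg
  have hder : ∀ ρ ∈ Set.Ioo s t, HasDerivAt g (deriv μ ρ / μ ρ - c * ρ⁻¹) ρ := by
    intro ρ hρ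
    have hρ0 : 0 < ρ := hs.trans hρ.1
    have h1 := (hdiff ρ hρ0).hasDerivAt
    have h2 := h1.log (hpos ρ hρ0).ne'
    have h3 := (Real.hasDerivAt_log hρ0.ne').const_mul c
    exact h2.sub h3
  have hgmono : MonotoneOn g (Set.Icc s t) := by
    apply monotoneOn_of_deriv_nonneg (convex_Icc s t)
    · apply ContinuousOn.sub
      · exact ContinuousOn.log (hC1.continuousOn.mono hsub)
          (fun ρ hρ => (hpos ρ (hsub hρ)).ne')
      · exact continuousOn_const.mul (Real.continuousOn_log.mono
          (fun x hx => ne_of_gt (hsub hx)))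
    · rw [interior_Icc]
      exact fun ρ hρ => (hder ρ hρ).differentiableAt.differentiableWithinAt
    · rw [interior_Icc]
      intro ρ hρ
      have hρ0 : 0 < ρ := hs.trans hρ.1
      have hμ : 0 < μ ρ := hpos ρ hρ0
      rw [(hder ρ hρ).deriv, sub_nonneg, ← div_eq_mul_inv]
      rw [div_le_div_iff₀ hρ0 hμ]
      nlinarith [(le_div_iff₀ hμ).1 (h ρ ⟨hρ.1.le, hρ.2.le⟩)]
  have hgle : g s ≤ g t := hgmono ⟨le_rfl, hst⟩ ⟨hst, le_rfl⟩ hst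
  have h1 : Real.log (μ s / s ^ c) ≤ Real.log (μ t / t ^ c) := by
    rw [Real.log_div (hpos t ht).ne' (Real.rpow_pos_of_pos ht c).ne',
        Real.log_div (hpos s hs).ne' (Real.rpow_pos_of_pos hs c).ne',
        Real.log_rpow ht, Real.log_rpow hs]
    simpa [hg] using hgle
  have := Real.exp_le_exp.2 h1
  rwa [Real.exp_log (div_pos (hpos s hs) (Real.rpow_pos_of_pos hs c)),
    Real.exp_log (div_pos (hpos t ht) (Real.rpow_pos_of_pos ht c))] at this


/-- Under the structural hypotheses on the shear viscosity `μ` (vacuum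
condition with exponent `α ∈ (2/3,4]`, large-density condition with exponent `β ∈ (1,4)` or
`μ(ρ) = ρ` for large `ρ`) and the compatibility condition between the pressure exponent
`γ ≥ 1` and `α` (either `α < 1`, or `γ < α`, or `μ(ρ) ≥ c₀ρ` near vacuum), the quantity
`μ(ρ)/ρ + aγρ^{γ−1}/μ'(ρ) = μ(ρ)/ρ + ρH''(ρ)/μ'(ρ)` is bounded below by a positive
constant, uniformly in `ρ > 0`. -/
theorem stmt3 (μ : ℝ → ℝ)
    (hcont : ContinuousOn μ (Set.Ici 0))
    (hC1 : ContDiffOn ℝ 1 μ (Set.Ioi 0))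
    (hpos : ∀ ρ > (0:ℝ), 0 < μ ρ) (hpos' : ∀ ρ > (0:ℝ), 0 < deriv μ ρ)
    (α : ℝ) (hα1 : 2 / 3 < α) (hα2 : α ≤ 4)
    (hvac : Tendsto (fun ρ => ρ * deriv μ ρ / μ ρ) (nhdsWithin 0 (Set.Ioi 0)) (nhds α))
    (hlarge : (∃ β : ℝ, 1 < β ∧ β < 4 ∧
        Tendsto (fun ρ => ρ * deriv μ ρ / μ ρ) atTop (nhds β)) ∨
      (∃ M₀ > (0:ℝ), ∀ ρ ≥ M₀, μ ρ = ρ))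
    (a γ : ℝ) (ha : 0 < a) (hγ : 1 ≤ γ)
    (hcase : α < 1 ∨ γ < α ∨
      ∃ c₀ > (0:ℝ), ∃ ρs > (0:ℝ), ∀ ρ ∈ Set.Ioo (0:ℝ) ρs, c₀ * ρ ≤ μ ρ) :
    ∃ C > (0:ℝ), ∀ ρ > (0:ℝ), μ ρ / ρ + a * γ * ρ ^ (γ - 1) / deriv μ ρ ≥ C := by
  set f : ℝ → ℝ := fun ρ => μ ρ / ρ + a * γ * ρ ^ (γ - 1) / deriv μ ρ with hf
  have hterm2 : ∀ ρ > (0:ℝ), 0 ≤ a * γ * ρ ^ (γ - 1) / deriv μ ρ := by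
    intro ρ hρ
    exact div_nonneg (mul_nonneg (mul_nonneg ha.le (by linarith))
      (Real.rpow_nonneg hρ.le _)) (hpos' ρ hρ).le
  have hterm1 : ∀ ρ > (0:ℝ), 0 < μ ρ / ρ := fun ρ hρ => div_pos (hpos ρ hρ) hρ
  -- Near-vacuum lower bound
  have hnear0 : ∃ δ > (0:ℝ), ∃ C0 > (0:ℝ), ∀ ρ ∈ Set.Ioc 0 δ, C0 ≤ f ρ := by
    rcases hcase with hA | hB | ⟨c₀, hc₀, ρs, hρs, hc⟩
    · -- α < 1
      set c := (α + 1) / 2 with hcdef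
      have hev : ∀ᶠ ρ in nhdsWithin 0 (Set.Ioi 0), ρ * deriv μ ρ / μ ρ < c :=
        hvac.eventually_lt_const (by rw [hcdef]; linarith)
      rw [Filter.eventually_iff, mem_nhdsGT_iff_exists_Ioo_subset] at hev
      obtain ⟨u, hu, hsubs⟩ := hev
      have hu0 : (0:ℝ) < u := hu
      set δ := min (u / 2) 1 with hδdef
      have hδ0 : 0 < δ := lt_min (by linarith) one_pos
      have hδu : δ < u := lt_of_le_of_lt (min_le_left _ _) (by linarith)
      have hδ1 : δ ≤ 1 := min_le_right _ _
      refine ⟨δ, hδ0, μ δ / δ ^ c, div_pos (hpos δ hδ0) (Real.rpow_pos_of_pos hδ0 c), ?_⟩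
      intro ρ hρ
      have hρ0 : 0 < ρ := hρ.1
      have hcond : ∀ x ∈ Set.Icc ρ δ, x * deriv μ x / μ x ≤ c := fun x hx =>
        (hsubs ⟨hρ0.trans_le hx.1, lt_of_le_of_lt hx.2 hδu⟩).le
      have hmono := stmt3_aux_anti μ hC1 hpos c ρ δ hρ0 hρ.2 hcond
      have hρc : (1:ℝ) ≤ ρ ^ (c - 1) :=
        Real.one_le_rpow_of_pos_of_le_one_of_nonpos hρ0 (hρ.2.trans hδ1)
          (by rw [hcdef]; linarith)
      have hid : μ ρ / ρ = μ ρ / ρ ^ c * ρ ^ (c - 1) := by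
        rw [Real.rpow_sub hρ0, Real.rpow_one]
        have h1 : (ρ:ℝ) ^ c ≠ 0 := (Real.rpow_pos_of_pos hρ0 c).ne'
        field_simp
      have hnn : 0 ≤ μ ρ / ρ ^ c := (div_pos (hpos ρ hρ0) (Real.rpow_pos_of_pos hρ0 c)).le
      have h2 : μ δ / δ ^ c ≤ μ ρ / ρ := by
        rw [hid]
        calc μ δ / δ ^ c = μ δ / δ ^ c * 1 := (mul_one _).symm
          _ ≤ μ ρ / ρ ^ c * ρ ^ (c - 1) := mul_le_mul hmono hρc zero_le_one hnn
      have := hterm2 ρ hρ0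
      simp only [hf]
      linarith
    · -- γ < α
      set c := (γ + α) / 2 with hcdef
      have hev : ∀ᶠ ρ in nhdsWithin 0 (Set.Ioi 0),
          c < ρ * deriv μ ρ / μ ρ ∧ ρ * deriv μ ρ / μ ρ < α + 1 :=
        (hvac.eventually_const_lt (by rw [hcdef]; linarith)).and
          (hvac.eventually_lt_const (by linarith))
      rw [Filter.eventually_iff, mem_nhdsGT_iff_exists_Ioo_subset] at hev
      obtain ⟨u, hu, hsubs⟩ := hev
      have hu0 : (0:ℝ) < u := hu
      set δ := min (u / 2) 1 with hδdef
      have hδ0 : 0 < δ := lt_min (by linarith) one_pos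
      have hδu : δ < u := lt_of_le_of_lt (min_le_left _ _) (by linarith)
      have hδ1 : δ ≤ 1 := min_le_right _ _
      set K := μ δ / δ ^ c with hKdef
      have hK0 : 0 < K := div_pos (hpos δ hδ0) (Real.rpow_pos_of_pos hδ0 c)
      have hα1' : (0:ℝ) < α + 1 := by linarith
      have hγ0 : (0:ℝ) < γ := by linarith
      refine ⟨δ, hδ0, a * γ / ((α + 1) * K),
        div_pos (mul_pos ha hγ0) (mul_pos hα1' hK0), ?_⟩
      intro ρ hρ
      have hρ0 : 0 < ρ := hρ.1
      have hμρ : 0 < μ ρ := hpos ρ hρ0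
      have hd1 : 0 < deriv μ ρ := hpos' ρ hρ0
      have hcond : ∀ x ∈ Set.Icc ρ δ, c ≤ x * deriv μ x / μ x := fun x hx =>
        (hsubs ⟨hρ0.trans_le hx.1, lt_of_le_of_lt hx.2 hδu⟩).1.le
      have hmono := stmt3_aux_mono μ hC1 hpos c ρ δ hρ0 hρ.2 hcond
      have hμle : μ ρ ≤ K * ρ ^ c := by
        rw [hKdef]
        have := (div_le_div_iff₀ (Real.rpow_pos_of_pos hρ0 c)
          (Real.rpow_pos_of_pos hδ0 c)).1 hmono
        have hρc0 : (0:ℝ) < ρ ^ c := Real.rpow_pos_of_pos hρ0 c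
        have hδc0 : (0:ℝ) < δ ^ c := Real.rpow_pos_of_pos hδ0 c
        rw [div_mul_eq_mul_div, le_div_iff₀ hδc0]
        nlinarith
      have hub : ρ * deriv μ ρ / μ ρ < α + 1 := (hsubs ⟨hρ0, lt_of_le_of_lt hρ.2 hδu⟩).2
      have hub' : ρ * deriv μ ρ ≤ (α + 1) * μ ρ := by
        have := (div_le_iff₀ hμρ).1 hub.le
        linarith
      have e1 : ρ ^ (c - 1) = ρ ^ c / ρ := by rw [Real.rpow_sub hρ0, Real.rpow_one]
      have hbound : deriv μ ρ ≤ (α + 1) * K * ρ ^ (c - 1) := by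
        rw [e1, ← mul_div_assoc, le_div_iff₀ hρ0]
        calc deriv μ ρ * ρ = ρ * deriv μ ρ := by ring
          _ ≤ (α + 1) * μ ρ := hub'
          _ ≤ (α + 1) * (K * ρ ^ c) := by nlinarith
          _ = (α + 1) * K * ρ ^ c := by ring
      have hden0 : 0 < (α + 1) * K * ρ ^ (c - 1) :=
        mul_pos (mul_pos hα1' hK0) (Real.rpow_pos_of_pos hρ0 _)
      have hnum0 : 0 < a * γ * ρ ^ (γ - 1) :=
        mul_pos (mul_pos ha hγ0) (Real.rpow_pos_of_pos hρ0 _)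
      have hterm : a * γ * ρ ^ (γ - 1) / ((α + 1) * K * ρ ^ (c - 1))
          ≤ a * γ * ρ ^ (γ - 1) / deriv μ ρ :=
        div_le_div_of_nonneg_left hnum0.le hd1 hbound
      have heq : a * γ * ρ ^ (γ - 1) / ((α + 1) * K * ρ ^ (c - 1))
          = a * γ / ((α + 1) * K) * ρ ^ (γ - c) := by
        rw [show γ - 1 = (γ - c) + (c - 1) by ring, Real.rpow_add hρ0]
        have h1 : ((α + 1) * K) ≠ 0 := (mul_pos hα1' hK0).ne'
        have h2 : (ρ:ℝ) ^ (c - 1) ≠ 0 := (Real.rpow_pos_of_pos hρ0 _).ne'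
        field_simp
      have hge1 : (1:ℝ) ≤ ρ ^ (γ - c) :=
        Real.one_le_rpow_of_pos_of_le_one_of_nonpos hρ0 (hρ.2.trans hδ1)
          (by rw [hcdef]; linarith)
      have h3 : a * γ / ((α + 1) * K) ≤ a * γ * ρ ^ (γ - 1) / deriv μ ρ := by
        calc a * γ / ((α + 1) * K) = a * γ / ((α + 1) * K) * 1 := (mul_one _).symm
          _ ≤ a * γ / ((α + 1) * K) * ρ ^ (γ - c) := by
              apply mul_le_mul_of_nonneg_left hge1
              exact (div_pos (mul_pos ha hγ0) (mul_pos hα1' hK0)).le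
          _ = a * γ * ρ ^ (γ - 1) / ((α + 1) * K * ρ ^ (c - 1)) := heq.symm
          _ ≤ a * γ * ρ ^ (γ - 1) / deriv μ ρ := hterm
      have := hterm1 ρ hρ0
      simp only [hf]
      linarith
    · -- μ ≥ c₀ ρ near vacuum
      refine ⟨ρs / 2, by linarith, c₀, hc₀, ?_⟩
      intro ρ hρ
      have hρ0 : 0 < ρ := hρ.1
      have h1 : c₀ ≤ μ ρ / ρ := by
        rw [le_div_iff₀ hρ0]
        exact hc ρ ⟨hρ0, lt_of_le_of_lt hρ.2 (by linarith)⟩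
      have := hterm2 ρ hρ0
      simp only [hf]
      linarith
  -- Large-density lower bound
  have hinf : ∃ M > (0:ℝ), ∃ C1 > (0:ℝ), ∀ ρ ≥ M, C1 ≤ f ρ := by
    rcases hlarge with ⟨β, hβ1, hβ4, hβt⟩ | ⟨M₀, hM₀, hid⟩
    · set c := (1 + β) / 2 with hcdef
      have hev : ∀ᶠ ρ in atTop, c < ρ * deriv μ ρ / μ ρ :=
        hβt.eventually_const_lt (by rw [hcdef]; linarith)
      rw [eventually_atTop] at hev
      obtain ⟨m, hm⟩ := hev
      set M := max m 1 with hMdef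
      have hM0 : (0:ℝ) < M := lt_of_lt_of_le one_pos (le_max_right _ _)
      refine ⟨M, hM0, μ M / M ^ c, div_pos (hpos M hM0) (Real.rpow_pos_of_pos hM0 c), ?_⟩
      intro ρ hρ
      have hρ0 : 0 < ρ := hM0.trans_le hρ
      have hcond : ∀ x ∈ Set.Icc M ρ, c ≤ x * deriv μ x / μ x := fun x hx =>
        (hm x (le_trans (le_max_left _ _) hx.1)).le
      have hmono := stmt3_aux_mono μ hC1 hpos c M ρ hM0 hρ hcond
      have hρ1 : (1:ℝ) ≤ ρ := le_trans (le_max_right _ _) hρ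
      have hρc : (1:ℝ) ≤ ρ ^ (c - 1) := Real.one_le_rpow hρ1 (by rw [hcdef]; linarith)
      have hid2 : μ ρ / ρ = μ ρ / ρ ^ c * ρ ^ (c - 1) := by
        rw [Real.rpow_sub hρ0, Real.rpow_one]
        have h1 : (ρ:ℝ) ^ c ≠ 0 := (Real.rpow_pos_of_pos hρ0 c).ne'
        field_simp
      have hnnM : 0 ≤ μ M / M ^ c := (div_pos (hpos M hM0) (Real.rpow_pos_of_pos hM0 c)).le
      have h2 : μ M / M ^ c ≤ μ ρ / ρ := by
        rw [hid2]
        calc μ M / M ^ c = μ M / M ^ c * 1 := (mul_one _).symm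
          _ ≤ μ ρ / ρ ^ c * ρ ^ (c - 1) := mul_le_mul hmono hρc zero_le_one
              ((div_pos (hpos ρ hρ0) (Real.rpow_pos_of_pos hρ0 c)).le)
      have := hterm2 ρ hρ0
      simp only [hf]
      linarith
    · refine ⟨M₀, hM₀, 1, one_pos, ?_⟩
      intro ρ hρ
      have hρ0 : 0 < ρ := hM₀.trans_le hρ
      have h1 : μ ρ / ρ = 1 := by rw [hid ρ hρ, div_self hρ0.ne']
      have := hterm2 ρ hρ0
      simp only [hf]
      linarith
  obtain ⟨δ, hδ0, C0, hC0, h0⟩ := hnear0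
  obtain ⟨M, hM0, C1, hC1', h1⟩ := hinf
  set M' := max M δ with hM'def
  have hδM' : δ ≤ M' := le_max_right _ _
  have hM'0 : 0 < M' := hδ0.trans_le hδM'
  -- minimum over the compact middle region
  have hconts : ContinuousOn f (Set.Icc δ M') := by
    have hsub : Set.Icc δ M' ⊆ Set.Ioi 0 := fun x hx => hδ0.trans_le hx.1
    apply ContinuousOn.add
    · exact ContinuousOn.div (hcont.mono (fun x hx => Set.mem_Ici.mpr (le_of_lt (hsub hx))))
        continuousOn_id (fun x hx => (hsub hx).ne')
    · apply ContinuousOn.div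
      · exact continuousOn_const.mul (fun x hx =>
          (Real.continuousAt_rpow_const x (γ - 1) (Or.inr (by linarith))).continuousWithinAt)
      · exact (hC1.continuousOn_deriv_of_isOpen isOpen_Ioi le_rfl).mono hsub
      · exact fun x hx => (hpos' x (hsub hx)).ne'
  obtain ⟨x₀, hx₀, hminOn⟩ := isCompact_Icc.exists_isMinOn ⟨δ, le_rfl, hδM'⟩ hconts
  have hx₀0 : 0 < x₀ := hδ0.trans_le hx₀.1
  have hCmid : 0 < f x₀ := by
    have := hterm1 x₀ hx₀0
    have := hterm2 x₀ hx₀0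
    simp only [hf]
    linarith
  refine ⟨min C0 (min C1 (f x₀)), lt_min hC0 (lt_min hC1' hCmid), ?_⟩
  intro ρ hρ
  rcases le_or_gt ρ δ with hcase1 | hcase1
  · calc min C0 (min C1 (f x₀)) ≤ C0 := min_le_left _ _
      _ ≤ f ρ := h0 ρ ⟨hρ, hcase1⟩
  · rcases le_or_gt ρ M' with hcase2 | hcase2
    · calc min C0 (min C1 (f x₀)) ≤ f x₀ := le_trans (min_le_right _ _) (min_le_right _ _)
        _ ≤ f ρ := hminOn ⟨hcase1.le, hcase2⟩
    · have hρM : M ≤ ρ := le_trans (le_max_left _ _) hcase2.le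
      calc min C0 (min C1 (f x₀)) ≤ C1 := le_trans (min_le_right _ _) (min_le_left _ _)
        _ ≤ f ρ := h1 ρ hρM
end

section
/- Let 0 < ρ₀ < r < M, let C₀ > 0, let F : ℝ → ℝ satisfy F(ρ) ≥ max(ρ, 1) for all ρ > M, and let G : [0,∞) → ℝ be twice continuously differentiable on an open interval containing [ρ₀, M], with G(ρ) ≤ C₀ for all ρ ∈ [0, ρ₀) and G(ρ) ≤ C₀ F(ρ) for all ρ > M. Then there exists a constant C₁ > 0 such that for every ρ ≥ 0: G(ρ) − G(r) − G'(r)(ρ − r) ≤ C₁ ( |ρ − r|² 𝟙_{ρ₀ ≤ ρ ≤ M}(ρ) + 𝟙_{ρ < ρ₀}(ρ) + F(ρ) 𝟙_{ρ > M}(ρ) ). -/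
/-- If `G` is `C²` on an open interval containing `[ρ₀, M]`, bounded by `C₀`
on `[0, ρ₀)` and by `C₀ F(ρ)` for `ρ > M` (where `F(ρ) ≥ max(ρ,1)` for `ρ > M`), then the
relative quantity `G(ρ|r) = G(ρ) − G(r) − G'(r)(ρ − r)` is controlled, for `ρ ≥ 0`, by
`C₁ (|ρ−r|² 𝟙_{ρ₀≤ρ≤M} + 𝟙_{ρ<ρ₀} + F(ρ) 𝟙_{ρ>M})`. -/
theorem stmt4 (ρ₀ r M C₀ : ℝ) (h0 : 0 < ρ₀) (h1 : ρ₀ < r) (h2 : r < M) (hC₀ : 0 < C₀)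
    (F G : ℝ → ℝ)
    (hF : ∀ ρ > M, max ρ 1 ≤ F ρ)
    (hG : ∃ s t : ℝ, s < ρ₀ ∧ M < t ∧ ContDiffOn ℝ 2 G (Set.Ioo s t))
    (hGsmall : ∀ ρ, 0 ≤ ρ → ρ < ρ₀ → G ρ ≤ C₀)
    (hGbig : ∀ ρ > M, G ρ ≤ C₀ * F ρ) :
    ∃ C₁ > (0:ℝ), ∀ ρ ≥ (0:ℝ),
      G ρ - G r - deriv G r * (ρ - r) ≤
        C₁ * ((if ρ₀ ≤ ρ ∧ ρ ≤ M then |ρ - r| ^ 2 else 0) +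
              (if ρ < ρ₀ then 1 else 0) +
              (if M < ρ then F ρ else 0)) := by
  obtain ⟨s, t, hs, ht, hC2⟩ := hG
  have hopen : IsOpen (Set.Ioo s t) := isOpen_Ioo
  have hsub : Set.Icc ρ₀ M ⊆ Set.Ioo s t := fun x hx =>
    ⟨lt_of_lt_of_le hs hx.1, lt_of_le_of_lt hx.2 ht⟩
  have hrI : r ∈ Set.Icc ρ₀ M := ⟨h1.le, h2.le⟩
  have hd1 : ContDiffOn ℝ 1 (deriv G) (Set.Ioo s t) :=
    hC2.deriv_of_isOpen hopen (by norm_num)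
  have hG' : ∀ x ∈ Set.Ioo s t, HasDerivAt G (deriv G x) x := fun x hx =>
    ((hC2.contDiffAt (hopen.mem_nhds hx)).differentiableAt (by norm_num)).hasDerivAt
  have hG'' : ∀ x ∈ Set.Ioo s t, HasDerivAt (deriv G) (deriv (deriv G) x) x := fun x hx =>
    ((hd1.contDiffAt (hopen.mem_nhds hx)).differentiableAt (by norm_num)).hasDerivAt
  have hcont : ContinuousOn (fun x => |deriv (deriv G) x|) (Set.Icc ρ₀ M) :=
    ((hd1.continuousOn_deriv_of_isOpen hopen (le_refl _)).mono hsub).abs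
  obtain ⟨x₀, hx₀, hKle'⟩ := (isCompact_Icc).exists_isMaxOn ⟨r, hrI⟩ hcont
  have hKle : ∀ y ∈ Set.Icc ρ₀ M, |deriv (deriv G) y| ≤ |deriv (deriv G) x₀| := hKle'
  set K := |deriv (deriv G) x₀| with hKdef
  have hK0 : 0 ≤ K := abs_nonneg _
  -- Lipschitz bound on deriv G over [ρ₀, M]
  have hlip : ∀ x ∈ Set.Icc ρ₀ M, ‖deriv G x - deriv G r‖ ≤ K * ‖x - r‖ := by
    intro x hx
    exact Convex.norm_image_sub_le_of_norm_hasDerivWithin_le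
      (fun y hy => (hG'' y (hsub hy)).hasDerivWithinAt)
      (fun y hy => by simpa using hKle y hy) (convex_Icc _ _) hrI hx
  -- Taylor-type bound on [ρ₀, M]
  have htay : ∀ ρ ∈ Set.Icc ρ₀ M,
      G ρ - G r - deriv G r * (ρ - r) ≤ K * |ρ - r| ^ 2 := by
    intro ρ hρ
    have hsub2 : Set.uIcc r ρ ⊆ Set.Icc ρ₀ M := Set.uIcc_subset_Icc hrI hρ
    have hder : ∀ y ∈ Set.uIcc r ρ, HasDerivWithinAt (fun x => G x - deriv G r * x)
        (deriv G y - deriv G r) (Set.uIcc r ρ) y := by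
      intro y hy
      have h1' := hG' y (hsub (hsub2 hy))
      have h2' : HasDerivAt (fun x => deriv G r * x) (deriv G r) y := by
        simpa using (hasDerivAt_id y).const_mul (deriv G r)
      exact (h1'.sub h2').hasDerivWithinAt
    have hbd : ∀ y ∈ Set.uIcc r ρ, ‖deriv G y - deriv G r‖ ≤ K * |ρ - r| := by
      intro y hy
      refine le_trans (hlip y (hsub2 hy)) ?_
      have hyy : |y - r| ≤ |ρ - r| := by
        rcases Set.mem_uIcc.1 hy with ⟨ha, hb⟩ | ⟨ha, hb⟩
        · rw [abs_of_nonneg (by linarith), abs_of_nonneg (by linarith)]; linarith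
        · rw [abs_of_nonpos (by linarith), abs_of_nonpos (by linarith)]; linarith
      have : ‖y - r‖ = |y - r| := rfl
      rw [this]
      exact mul_le_mul_of_nonneg_left hyy hK0
    have key := Convex.norm_image_sub_le_of_norm_hasDerivWithin_le hder hbd
      (convex_uIcc r ρ) Set.left_mem_uIcc Set.right_mem_uIcc
    have key2 : G ρ - G r - deriv G r * (ρ - r) ≤ K * |ρ - r| * |ρ - r| := by
      have h2' : |(G ρ - deriv G r * ρ) - (G r - deriv G r * r)| ≤ K * |ρ - r| * |ρ - r| := by
        simpa [Real.norm_eq_abs] using key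
      have := (abs_le.1 h2').2
      nlinarith
    calc G ρ - G r - deriv G r * (ρ - r) ≤ K * |ρ - r| * |ρ - r| := key2
      _ = K * |ρ - r| ^ 2 := by ring
  -- choose the constant
  set A := |G r| with hAdef
  set B := |deriv G r| with hBdef
  have hA0 : 0 ≤ A := abs_nonneg _
  have hB0 : 0 ≤ B := abs_nonneg _
  refine ⟨K + C₀ + A + B * (1 + r) + 1, by nlinarith, ?_⟩
  intro ρ hρ
  rcases lt_or_ge ρ ρ₀ with hcase | hge
  · -- ρ < ρ₀
    rw [if_neg (by push_neg; intro h; linarith), if_pos hcase, if_neg (by linarith)]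
    have hGb := hGsmall ρ hρ hcase
    have habs : |ρ - r| ≤ r := by rw [abs_of_nonpos (by linarith)]; linarith
    have h2' : -(deriv G r * (ρ - r)) ≤ B * r := by
      calc -(deriv G r * (ρ - r)) ≤ |deriv G r * (ρ - r)| := neg_le_abs _
        _ = B * |ρ - r| := abs_mul _ _
        _ ≤ B * r := mul_le_mul_of_nonneg_left habs hB0
    have h3' : -G r ≤ A := neg_le_abs _
    nlinarith
  rcases le_or_gt ρ M with hle | hbig
  · -- ρ₀ ≤ ρ ≤ M
    rw [if_pos ⟨hge, hle⟩, if_neg (not_lt.2 hge), if_neg (not_lt.2 hle)]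
    have := htay ρ ⟨hge, hle⟩
    have hsq : (0:ℝ) ≤ |ρ - r| ^ 2 := by positivity
    have hKC : K ≤ K + C₀ + A + B * (1 + r) + 1 := by nlinarith [mul_nonneg hB0 (by linarith : (0:ℝ) ≤ r)]
    have := mul_le_mul_of_nonneg_right hKC hsq
    linarith
  · -- ρ > M
    rw [if_neg (by push_neg; intro _; linarith), if_neg (by linarith), if_pos hbig]
    have hF1 : (1:ℝ) ≤ F ρ := le_trans (le_max_right ρ 1) (hF ρ hbig)
    have hFρ : ρ ≤ F ρ := le_trans (le_max_left ρ 1) (hF ρ hbig)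
    have hGb := hGbig ρ hbig
    have habs : |ρ - r| ≤ ρ := by rw [abs_of_nonneg (by linarith)]; linarith
    have h2' : -(deriv G r * (ρ - r)) ≤ B * ρ := by
      calc -(deriv G r * (ρ - r)) ≤ |deriv G r * (ρ - r)| := neg_le_abs _
        _ = B * |ρ - r| := abs_mul _ _
        _ ≤ B * ρ := mul_le_mul_of_nonneg_left habs hB0
    have h3' : -G r ≤ A := neg_le_abs _
    have h4' : B * ρ ≤ B * F ρ := mul_le_mul_of_nonneg_left hFρ hB0
    have h5' : A ≤ A * F ρ := le_mul_of_one_le_right hA0 hF1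
    have hCle : C₀ + A + B ≤ K + C₀ + A + B * (1 + r) + 1 := by
      nlinarith [mul_nonneg hB0 (by linarith : (0:ℝ) ≤ r)]
    have hmul := mul_le_mul_of_nonneg_right hCle (by linarith : (0:ℝ) ≤ F ρ)
    linarith
end

section
/- Let d ≥ 1, let Ω ⊂ ℝ^d be a bounded convex open set with positive Lebesgue measure, and let δ > 0. Then there exists a constant C > 0, depending only on Ω and δ, such that every continuously differentiable function f : Ω → ℝ with f ≥ 0 and |{x ∈ Ω : f(x) = 0}| ≥ δ satisfies ∫_Ω f(x)² dx ≤ C ∫_Ω |∇f(x)|² dx. -/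
open MeasureTheory

lemma cov_aux {d : ℕ} (g : (Fin d → ℝ) → ENNReal) (hg : Measurable g)
    (c : Fin d → ℝ) {t : ℝ} (ht : 0 < t) :
    ∫⁻ x, g (c + t • x) = ENNReal.ofReal ((t ^ d)⁻¹) * ∫⁻ x, g x := by
  have hmap : Measure.map (t • · : (Fin d → ℝ) → _) volume
      = ENNReal.ofReal |(t ^ Module.finrank ℝ (Fin d → ℝ))⁻¹| • volume :=
    Measure.map_addHaar_smul volume ht.ne'
  calc ∫⁻ x, g (c + t • x)
      = ∫⁻ y, g (c + y) ∂(Measure.map (t • · : (Fin d → ℝ) → _) volume) :=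
        (lintegral_map (f := fun y => g (c + y)) (hg.comp (measurable_const_add c))
          (measurable_const_smul t)).symm
    _ = ENNReal.ofReal ((t ^ d)⁻¹) * ∫⁻ y, g (c + y) := by
        rw [hmap, lintegral_smul_measure, Module.finrank_fin_fun,
          abs_of_nonneg (by positivity), smul_eq_mul]
    _ = _ := congrArg (ENNReal.ofReal (t ^ d)⁻¹ * ·) (lintegral_add_left_eq_self g c)

lemma cs_aux (u : ℝ → ENNReal) (hu : AEMeasurable u (volume.restrict (Set.Icc (0:ℝ) 1))) :
    (∫⁻ t in Set.Icc (0:ℝ) 1, u t) ^ 2 ≤ ∫⁻ t in Set.Icc (0:ℝ) 1, (u t) ^ 2 := by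
  have hpq : Real.HolderConjugate 2 2 := Real.HolderConjugate.two_two
  have h := ENNReal.lintegral_mul_le_Lp_mul_Lq (volume.restrict (Set.Icc (0:ℝ) 1)) hpq hu
    aemeasurable_const (g := fun _ => (1:ENNReal))
  simp only [Pi.mul_apply, mul_one, ENNReal.one_rpow] at h
  rw [setLIntegral_const, Real.volume_Icc, sub_zero, ENNReal.ofReal_one, one_mul,
    ENNReal.one_rpow, mul_one] at h
  calc (∫⁻ t in Set.Icc (0:ℝ) 1, u t) ^ 2
      ≤ ((∫⁻ t in Set.Icc (0:ℝ) 1, u t ^ (2:ℝ)) ^ (1/(2:ℝ))) ^ 2 := pow_le_pow_left' h 2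
    _ = ∫⁻ t in Set.Icc (0:ℝ) 1, u t ^ 2 := by
        rw [← ENNReal.rpow_natCast (_ ^ (1/(2:ℝ))) 2, ← ENNReal.rpow_mul]
        norm_num

lemma clm_expand {d : ℕ} (L : (Fin d → ℝ) →L[ℝ] ℝ) (v : Fin d → ℝ) :
    L v = ∑ i, v i * L (Pi.single i 1) := by
  have hv : v = ∑ i, v i • (Pi.single i 1 : Fin d → ℝ) := by
    funext j
    simp [Finset.sum_apply, Pi.single_apply]
  conv_lhs => rw [hv]
  simp [map_sum, smul_eq_mul]


lemma pt_aux {d : ℕ} {Ω : Set (Fin d → ℝ)} (hconv : Convex ℝ Ω) (hopen : IsOpen Ω)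
    {f : (Fin d → ℝ) → ℝ} (hf : ContDiffOn ℝ 1 f Ω)
    {x z : Fin d → ℝ} (hx : x ∈ Ω) (hz : z ∈ Ω) (hfz : f z = 0) (hfx : 0 ≤ f x) :
    ENNReal.ofReal (f x ^ 2) ≤ ENNReal.ofReal (∑ i, (x i - z i) ^ 2) *
      ∫⁻ t in Set.Icc (0:ℝ) 1,
        Set.indicator Ω (fun y => ENNReal.ofReal (∑ i, (fderiv ℝ f y (Pi.single i 1)) ^ 2))
          ((1 - t) • z + t • x) := by
  set g : ℝ → (Fin d → ℝ) := fun t => (1 - t) • z + t • x with hg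
  have hgΩ : ∀ t ∈ Set.Icc (0:ℝ) 1, g t ∈ Ω := by
    intro t ht
    exact hconv hz hx (by linarith [ht.2]) ht.1 (by ring)
  have hgcont : Continuous g := by fun_prop
  have hgderiv : ∀ t : ℝ, HasDerivAt g (x - z) t := by
    intro t
    have h1 : HasDerivAt (fun s : ℝ => (1 - s) • z + s • x) ((-1:ℝ) • z + (1:ℝ) • x) t :=
      (((hasDerivAt_id t).const_sub 1).smul_const z).add ((hasDerivAt_id t).smul_const x)
    have h2 : x - z = (-1:ℝ) • z + (1:ℝ) • x := by module
    exact h2 ▸ h1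
  have hfd : ∀ y ∈ Ω, DifferentiableAt ℝ f y := fun y hy =>
    (hf.differentiableOn one_ne_zero).differentiableAt (hopen.mem_nhds hy)
  set u : ℝ → ℝ := fun t => fderiv ℝ f (g t) (x - z) with hu
  have hderiv : ∀ t ∈ Set.Icc (0:ℝ) 1, HasDerivAt (f ∘ g) (u t) t := fun t ht =>
    ((hfd (g t) (hgΩ t ht)).hasFDerivAt).comp_hasDerivAt t (hgderiv t)
  have hfderiv_cont : ContinuousOn (fun y => fderiv ℝ f y) Ω :=
    hf.continuousOn_fderiv_of_isOpen hopen le_rfl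
  have hucont : ContinuousOn u (Set.Icc (0:ℝ) 1) := by
    exact (hfderiv_cont.comp hgcont.continuousOn hgΩ).clm_apply continuousOn_const
  have hint : IntervalIntegrable u volume 0 1 := by
    apply ContinuousOn.intervalIntegrable
    rwa [Set.uIcc_of_le zero_le_one]
  have hftc : ∫ t in (0:ℝ)..1, u t = f (g 1) - f (g 0) :=
    intervalIntegral.integral_eq_sub_of_hasDerivAt
      (fun t ht => hderiv t (by rwa [Set.uIcc_of_le zero_le_one] at ht)) hint
  have hg1 : g 1 = x := by simp [hg]
  have hg0 : g 0 = z := by simp [hg]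
  have hfx_eq : f x = ∫ t in (0:ℝ)..1, u t := by
    rw [hftc, hg1, hg0, hfz, sub_zero]
  have habs : f x ≤ ∫ t in (0:ℝ)..1, |u t| := by
    calc f x = |∫ t in (0:ℝ)..1, u t| := by rw [← hfx_eq, abs_of_nonneg hfx]
      _ ≤ ∫ t in (0:ℝ)..1, |u t| := intervalIntegral.abs_integral_le_integral_abs zero_le_one
  have hintabs : IntegrableOn (fun t => |u t|) (Set.Icc (0:ℝ) 1) volume :=
    (hucont.abs).integrableOn_compact isCompact_Icc
  have h1 : ENNReal.ofReal (f x) ≤ ∫⁻ t in Set.Icc (0:ℝ) 1, ENNReal.ofReal |u t| := by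
    calc ENNReal.ofReal (f x) ≤ ENNReal.ofReal (∫ t in (0:ℝ)..1, |u t|) :=
          ENNReal.ofReal_le_ofReal habs
      _ = ENNReal.ofReal (∫ t in Set.Ioc (0:ℝ) 1, |u t|) := by
          rw [intervalIntegral.integral_of_le zero_le_one]
      _ = ∫⁻ t in Set.Ioc (0:ℝ) 1, ENNReal.ofReal |u t| :=
          ofReal_integral_eq_lintegral_ofReal
            (hintabs.mono_set Set.Ioc_subset_Icc_self)
            (Filter.Eventually.of_forall fun t => abs_nonneg _)
      _ ≤ ∫⁻ t in Set.Icc (0:ℝ) 1, ENNReal.ofReal |u t| :=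
          lintegral_mono' (Measure.restrict_mono Set.Ioc_subset_Icc_self le_rfl) le_rfl
  have humeas : AEMeasurable (fun t => ENNReal.ofReal |u t|)
      (volume.restrict (Set.Icc (0:ℝ) 1)) :=
    (ENNReal.measurable_ofReal.comp_aemeasurable
      ((hucont.abs).aemeasurable measurableSet_Icc))
  have h2 : ENNReal.ofReal (f x ^ 2) ≤ ∫⁻ t in Set.Icc (0:ℝ) 1, ENNReal.ofReal (u t ^ 2) := by
    rw [ENNReal.ofReal_pow hfx]
    refine le_trans (pow_le_pow_left' h1 2) (le_trans (cs_aux _ humeas) ?_)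
    refine lintegral_mono fun t => le_of_eq ?_
    rw [← ENNReal.ofReal_pow (abs_nonneg _), sq_abs]
  refine le_trans h2 ?_
  rw [← lintegral_const_mul']
  swap
  · exact ENNReal.ofReal_ne_top
  have hGmeas : Measurable (fun y : Fin d → ℝ =>
      Set.indicator Ω (fun y => ENNReal.ofReal (∑ i, (fderiv ℝ f y (Pi.single i 1)) ^ 2)) y) := by
    apply Measurable.indicator ?_ hopen.measurableSet
    apply Measurable.ennreal_ofReal
    apply Finset.measurable_sum
    intro i _
    exact (measurable_fderiv_apply_const ℝ f (Pi.single i 1)).pow_const 2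
  refine setLIntegral_mono ?_ ?_
  · exact (hGmeas.comp (by fun_prop : Measurable g)).const_mul _
  · intro t ht
    rw [Set.indicator_of_mem (hgΩ t ht)]
    rw [← ENNReal.ofReal_mul (by positivity)]
    apply ENNReal.ofReal_le_ofReal
    have : u t = ∑ i, (x i - z i) * (fderiv ℝ f (g t)) (Pi.single i 1) := by
      rw [hu]
      simpa using clm_expand (fderiv ℝ f (g t)) (x - z)
    rw [this]
    exact Finset.sum_mul_sq_le_sq_mul_sq Finset.univ _ _

lemma two_pow_aux {d : ℕ} {t : ℝ} (ht : 1/2 ≤ t) :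
    ENNReal.ofReal ((t ^ d)⁻¹) ≤ 2 ^ d := by
  have h0 : (0:ℝ) < t := lt_of_lt_of_le (by norm_num) ht
  have h1 : ((1:ℝ)/2) ^ d ≤ t ^ d := pow_le_pow_left₀ (by norm_num) ht d
  have h2 : (t ^ d)⁻¹ ≤ (((1:ℝ)/2) ^ d)⁻¹ := by
    apply inv_anti₀ (by positivity) h1
  have h3 : (((1:ℝ)/2) ^ d)⁻¹ = 2 ^ d := by
    rw [← inv_pow]; norm_num
  calc ENNReal.ofReal ((t ^ d)⁻¹) ≤ ENNReal.ofReal ((2:ℝ) ^ d) :=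
        ENNReal.ofReal_le_ofReal (h3 ▸ h2)
    _ = 2 ^ d := by
        rw [ENNReal.ofReal_pow (by norm_num)]
        norm_num


lemma core_aux {d : ℕ} (G : (Fin d → ℝ) → ENNReal) (hG : Measurable G)
    (Ω : Set (Fin d → ℝ)) (hΩ : MeasurableSet Ω) :
    (∫⁻ z in Ω, ∫⁻ x in Ω, ∫⁻ t in Set.Icc (0:ℝ) 1, G ((1 - t) • z + t • x))
      ≤ 2 ^ (d + 1) * volume Ω * ∫⁻ y, G y := by
  have hm : Measurable (fun p : (Fin d → ℝ) × (Fin d → ℝ) × ℝ =>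
      G ((1 - p.2.2) • p.1 + p.2.2 • p.2.1)) := by
    apply hG.comp
    fun_prop
  -- swap x and t (for fixed z)
  have swap1 : ∀ z : Fin d → ℝ,
      (∫⁻ x in Ω, ∫⁻ t in Set.Icc (0:ℝ) 1, G ((1 - t) • z + t • x))
        = ∫⁻ t in Set.Icc (0:ℝ) 1, ∫⁻ x in Ω, G ((1 - t) • z + t • x) := by
    intro z
    apply lintegral_lintegral_swap
    exact (hG.comp (by fun_prop :
      Measurable (fun p : (Fin d → ℝ) × ℝ => (1 - p.2) • z + p.2 • p.1))).aemeasurable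
  -- swap z and t
  have swap2 :
      (∫⁻ z in Ω, ∫⁻ t in Set.Icc (0:ℝ) 1, ∫⁻ x in Ω, G ((1 - t) • z + t • x))
        = ∫⁻ t in Set.Icc (0:ℝ) 1, ∫⁻ z in Ω, ∫⁻ x in Ω, G ((1 - t) • z + t • x) := by
    apply lintegral_lintegral_swap
    have : Measurable (fun p : (Fin d → ℝ) × ℝ =>
        ∫⁻ x in Ω, G ((1 - p.2) • p.1 + p.2 • x)) :=
      Measurable.lintegral_prod_right'
        (f := fun q : ((Fin d → ℝ) × ℝ) × (Fin d → ℝ) =>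
          G ((1 - q.1.2) • q.1.1 + q.1.2 • q.2))
        (hG.comp (by fun_prop))
    exact this.aemeasurable
  -- swap z and x (for fixed t)
  have swap3 : ∀ t : ℝ,
      (∫⁻ z in Ω, ∫⁻ x in Ω, G ((1 - t) • z + t • x))
        = ∫⁻ x in Ω, ∫⁻ z in Ω, G ((1 - t) • z + t • x) := by
    intro t
    apply lintegral_lintegral_swap
    exact (hG.comp (by fun_prop :
      Measurable (fun p : (Fin d → ℝ) × (Fin d → ℝ) => (1 - t) • p.1 + t • p.2))).aemeasurable
  simp_rw [swap1]
  rw [swap2]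
  set I : ENNReal := ∫⁻ y, G y with hI
  have keyB : ∀ t ∈ Set.Icc (0:ℝ) (1/2),
      (∫⁻ z in Ω, ∫⁻ x in Ω, G ((1 - t) • z + t • x)) ≤ 2 ^ d * volume Ω * I := by
    intro t ht
    rw [swap3 t]
    have inner : ∀ x : Fin d → ℝ,
        (∫⁻ z in Ω, G ((1 - t) • z + t • x)) ≤ 2 ^ d * I := by
      intro x
      have h1t : (0:ℝ) < 1 - t := by linarith [ht.2]
      calc (∫⁻ z in Ω, G ((1 - t) • z + t • x))
          ≤ ∫⁻ z, G ((1 - t) • z + t • x) := setLIntegral_le_lintegral _ _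
        _ = ∫⁻ z, G (t • x + (1 - t) • z) := by simp_rw [add_comm]
        _ = ENNReal.ofReal (((1 - t) ^ d)⁻¹) * I := cov_aux G hG _ h1t
        _ ≤ 2 ^ d * I := mul_le_mul_left (two_pow_aux (by linarith [ht.2])) I
    calc (∫⁻ x in Ω, ∫⁻ z in Ω, G ((1 - t) • z + t • x))
        ≤ ∫⁻ _x in Ω, 2 ^ d * I := lintegral_mono inner
      _ = 2 ^ d * I * volume Ω := setLIntegral_const _ _
      _ = 2 ^ d * volume Ω * I := by ring
  have keyA : ∀ t ∈ Set.Ioc (1/2:ℝ) 1,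
      (∫⁻ z in Ω, ∫⁻ x in Ω, G ((1 - t) • z + t • x)) ≤ 2 ^ d * volume Ω * I := by
    intro t ht
    have h0t : (0:ℝ) < t := lt_trans (by norm_num) ht.1
    have inner : ∀ z : Fin d → ℝ,
        (∫⁻ x in Ω, G ((1 - t) • z + t • x)) ≤ 2 ^ d * I := by
      intro z
      calc (∫⁻ x in Ω, G ((1 - t) • z + t • x))
          ≤ ∫⁻ x, G ((1 - t) • z + t • x) := setLIntegral_le_lintegral _ _
        _ = ENNReal.ofReal ((t ^ d)⁻¹) * I := cov_aux G hG _ h0t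
        _ ≤ 2 ^ d * I := mul_le_mul_left (two_pow_aux ht.1.le) I
    calc (∫⁻ z in Ω, ∫⁻ x in Ω, G ((1 - t) • z + t • x))
        ≤ ∫⁻ _z in Ω, 2 ^ d * I := lintegral_mono inner
      _ = 2 ^ d * I * volume Ω := setLIntegral_const _ _
      _ = 2 ^ d * volume Ω * I := by ring
  have hsplit : Set.Icc (0:ℝ) 1 = Set.Icc (0:ℝ) (1/2) ∪ Set.Ioc (1/2:ℝ) 1 :=
    (Set.Icc_union_Ioc_eq_Icc (by norm_num) (by norm_num)).symm
  rw [hsplit]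
  refine le_trans (lintegral_union_le _ _ _) ?_
  have hvol1 : volume (Set.Icc (0:ℝ) (1/2)) ≤ 1 := by
    rw [Real.volume_Icc]
    exact ENNReal.ofReal_le_one.mpr (by norm_num)
  have hvol2 : volume (Set.Ioc (1/2:ℝ) 1) ≤ 1 := by
    rw [Real.volume_Ioc]
    exact ENNReal.ofReal_le_one.mpr (by norm_num)
  have hb1 : (∫⁻ t in Set.Icc (0:ℝ) (1/2), ∫⁻ z in Ω, ∫⁻ x in Ω, G ((1 - t) • z + t • x))
      ≤ 2 ^ d * volume Ω * I := by
    refine le_trans (setLIntegral_mono_ae (g := fun _ => 2 ^ d * volume Ω * I)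
      aemeasurable_const (Filter.Eventually.of_forall keyB)) ?_
    · rw [setLIntegral_const]
      exact le_trans (mul_le_mul_right hvol1 _) (by simp)
  have hb2 : (∫⁻ t in Set.Ioc (1/2:ℝ) 1, ∫⁻ z in Ω, ∫⁻ x in Ω, G ((1 - t) • z + t • x))
      ≤ 2 ^ d * volume Ω * I := by
    refine le_trans (setLIntegral_mono_ae (g := fun _ => 2 ^ d * volume Ω * I)
      aemeasurable_const (Filter.Eventually.of_forall keyA)) ?_
    · rw [setLIntegral_const]
      exact le_trans (mul_le_mul_right hvol2 _) (by simp)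
  calc _ ≤ 2 ^ d * volume Ω * I + 2 ^ d * volume Ω * I := add_le_add hb1 hb2
    _ = 2 ^ (d + 1) * volume Ω * I := by rw [pow_succ]; ring

/-- On a bounded convex open set `Ω ⊂ ℝ^d` of positive measure, for every
`δ > 0` there is `C > 0` such that every nonnegative `C¹` function `f` vanishing on a set
of measure at least `δ` satisfies `∫_Ω f² ≤ C ∫_Ω |∇f|²`. -/
theorem stmt5 (d : ℕ) (hd : 1 ≤ d) (Ω : Set (Fin d → ℝ))
    (hbdd : Bornology.IsBounded Ω) (hconv : Convex ℝ Ω) (hopen : IsOpen Ω)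
    (hvol : 0 < volume Ω) (δ : ℝ) (hδ : 0 < δ) :
    ∃ C > (0:ℝ), ∀ f : (Fin d → ℝ) → ℝ,
      ContDiffOn ℝ 1 f Ω → (∀ x ∈ Ω, 0 ≤ f x) →
      ENNReal.ofReal δ ≤ volume {x ∈ Ω | f x = 0} →
      ∫⁻ x in Ω, ENNReal.ofReal ((f x) ^ 2) ≤
        ENNReal.ofReal C *
          ∫⁻ x in Ω, ENNReal.ofReal (∑ i, (fderiv ℝ f x (Pi.single i 1)) ^ 2) := by
  obtain ⟨R, hR0, hRsub⟩ := hbdd.subset_closedBall_lt 0 0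
  set K : ℝ := d * (2 * R) ^ 2 with hKdef
  have hK0 : 0 ≤ K := by positivity
  have hΩfin : volume Ω ≠ ⊤ :=
    ((measure_mono hRsub).trans_lt measure_closedBall_lt_top).ne
  set M : ℝ := (volume Ω).toReal with hMdef
  have hM0 : 0 ≤ M := ENNReal.toReal_nonneg
  have hM : volume Ω = ENNReal.ofReal M := (ENNReal.ofReal_toReal hΩfin).symm
  set C : ℝ := (K * 2 ^ (d + 1) * M + 1) / δ with hCdef
  refine ⟨C, by positivity, ?_⟩
  intro f hf hfnn hZvol
  set G : (Fin d → ℝ) → ENNReal :=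
    Set.indicator Ω (fun y => ENNReal.ofReal (∑ i, (fderiv ℝ f y (Pi.single i 1)) ^ 2))
    with hGdef
  have hΩm : MeasurableSet Ω := hopen.measurableSet
  have hGmeas : Measurable G := by
    apply Measurable.indicator ?_ hΩm
    apply Measurable.ennreal_ofReal
    apply Finset.measurable_sum
    intro i _
    exact (measurable_fderiv_apply_const ℝ f (Pi.single i 1)).pow_const 2
  set Z : Set (Fin d → ℝ) := {x ∈ Ω | f x = 0} with hZdef
  have hZsub : Z ⊆ Ω := fun x hx => hx.1
  have hZmeas : MeasurableSet Z := by
    have hU : IsOpen (Ω ∩ f ⁻¹' ({0}ᶜ)) :=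
      (hf.continuousOn).isOpen_inter_preimage hopen isOpen_compl_singleton
    have : Z = Ω \ (Ω ∩ f ⁻¹' ({0}ᶜ)) := by
      ext x
      simp only [hZdef, Set.mem_setOf_eq, Set.mem_diff, Set.mem_inter_iff, Set.mem_preimage,
        Set.mem_compl_iff, Set.mem_singleton_iff]
      tauto
    rw [this]
    exact hΩm.diff hU.measurableSet
  -- measurability of iterated integrals
  have hm3 : Measurable (fun p : (Fin d → ℝ) × (Fin d → ℝ) =>
      ∫⁻ t in Set.Icc (0:ℝ) 1, G ((1 - t) • p.1 + t • p.2)) :=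
    Measurable.lintegral_prod_right'
      (f := fun q : ((Fin d → ℝ) × (Fin d → ℝ)) × ℝ =>
        G ((1 - q.2) • q.1.1 + q.2 • q.1.2))
      (hGmeas.comp (by fun_prop))
  have hm4 : Measurable (fun z : Fin d → ℝ =>
      ∫⁻ x in Ω, ∫⁻ t in Set.Icc (0:ℝ) 1, G ((1 - t) • z + t • x)) :=
    Measurable.lintegral_prod_right'
      (f := fun q : (Fin d → ℝ) × (Fin d → ℝ) =>
        ∫⁻ t in Set.Icc (0:ℝ) 1, G ((1 - t) • q.1 + t • q.2)) hm3
  set L : ENNReal := ∫⁻ x in Ω, ENNReal.ofReal ((f x) ^ 2) with hLdef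
  set RHS : ENNReal := ∫⁻ y, G y with hRHSdef
  -- key bound for z ∈ Z
  have key : ∀ z ∈ Z, L ≤ ENNReal.ofReal K *
      ∫⁻ x in Ω, ∫⁻ t in Set.Icc (0:ℝ) 1, G ((1 - t) • z + t • x) := by
    intro z hzZ
    have hzΩ : z ∈ Ω := hzZ.1
    have hfz : f z = 0 := hzZ.2
    rw [hLdef, ← lintegral_const_mul' _ _ ENNReal.ofReal_ne_top]
    refine setLIntegral_mono ((hm3.comp (by fun_prop :
      Measurable (fun x : Fin d → ℝ => ((z : Fin d → ℝ), x)))).const_mul _) ?_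
    intro x hxΩ
    have hsum : (∑ i, (x i - z i) ^ 2) ≤ K := by
      rw [hKdef]
      have : ∀ i : Fin d, (x i - z i) ^ 2 ≤ (2 * R) ^ 2 := by
        intro i
        have hxi : |x i| ≤ R := by
          have := norm_le_pi_norm x i
          have hx' : ‖x‖ ≤ R := by
            simpa [Metric.mem_closedBall] using hRsub hxΩ
          simpa [Real.norm_eq_abs] using this.trans hx'
        have hzi : |z i| ≤ R := by
          have := norm_le_pi_norm z i
          have hz' : ‖z‖ ≤ R := by
            simpa [Metric.mem_closedBall] using hRsub hzΩ
          simpa [Real.norm_eq_abs] using this.trans hz'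
        have habs : |x i - z i| ≤ 2 * R := by
          calc |x i - z i| ≤ |x i| + |z i| := abs_sub _ _
            _ ≤ 2 * R := by linarith
        calc (x i - z i) ^ 2 = |x i - z i| ^ 2 := (sq_abs _).symm
          _ ≤ (2 * R) ^ 2 := by
            apply pow_le_pow_left₀ (abs_nonneg _) habs
      calc (∑ i, (x i - z i) ^ 2) ≤ ∑ _i : Fin d, (2 * R) ^ 2 :=
            Finset.sum_le_sum fun i _ => this i
        _ = d * (2 * R) ^ 2 := by simp [mul_comm]
    refine le_trans (pt_aux hconv hopen hf hxΩ hzΩ hfz (hfnn x hxΩ)) ?_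
    exact mul_le_mul_left (ENNReal.ofReal_le_ofReal hsum) _
  -- main chain
  have main : ENNReal.ofReal δ * L ≤
      ENNReal.ofReal K * (2 ^ (d + 1) * volume Ω * RHS) := by
    calc ENNReal.ofReal δ * L ≤ volume Z * L := mul_le_mul_left hZvol L
      _ = ∫⁻ _z in Z, L := by rw [setLIntegral_const, mul_comm]
      _ ≤ ∫⁻ z in Z, ENNReal.ofReal K *
            ∫⁻ x in Ω, ∫⁻ t in Set.Icc (0:ℝ) 1, G ((1 - t) • z + t • x) :=
          setLIntegral_mono (hm4.const_mul _) key
      _ ≤ ∫⁻ z in Ω, ENNReal.ofReal K *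
            ∫⁻ x in Ω, ∫⁻ t in Set.Icc (0:ℝ) 1, G ((1 - t) • z + t • x) :=
          lintegral_mono' (Measure.restrict_mono hZsub le_rfl) le_rfl
      _ = ENNReal.ofReal K *
            ∫⁻ z in Ω, ∫⁻ x in Ω, ∫⁻ t in Set.Icc (0:ℝ) 1, G ((1 - t) • z + t • x) :=
          lintegral_const_mul' _ _ ENNReal.ofReal_ne_top
      _ ≤ ENNReal.ofReal K * (2 ^ (d + 1) * volume Ω * RHS) :=
          mul_le_mul_right (core_aux G hGmeas Ω hΩm) _
  -- constant comparison
  have hconst : ENNReal.ofReal K * (2 ^ (d + 1) * volume Ω) ≤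
      ENNReal.ofReal δ * ENNReal.ofReal C := by
    have h2 : ((2:ENNReal) ^ (d+1)) = ENNReal.ofReal ((2:ℝ) ^ (d+1)) := by
      rw [ENNReal.ofReal_pow (by norm_num)]
      norm_num
    rw [hM, h2, ← ENNReal.ofReal_mul (by positivity), ← ENNReal.ofReal_mul hK0,
      ← ENNReal.ofReal_mul hδ.le]
    apply ENNReal.ofReal_le_ofReal
    have hC : δ * C = K * 2 ^ (d + 1) * M + 1 := by
      rw [hCdef]
      field_simp
    rw [hC]
    nlinarith [hK0, hM0]
  -- conclude
  have final : ENNReal.ofReal δ * L ≤ ENNReal.ofReal δ * (ENNReal.ofReal C * RHS) := by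
    calc ENNReal.ofReal δ * L ≤ ENNReal.ofReal K * (2 ^ (d + 1) * volume Ω * RHS) := main
      _ = (ENNReal.ofReal K * (2 ^ (d + 1) * volume Ω)) * RHS := by ring
      _ ≤ (ENNReal.ofReal δ * ENNReal.ofReal C) * RHS := mul_le_mul_left hconst RHS
      _ = ENNReal.ofReal δ * (ENNReal.ofReal C * RHS) := by ring
  have hδ0 : ENNReal.ofReal δ ≠ 0 := by
    simp [ENNReal.ofReal_eq_zero, not_le, hδ]
  have hL : L ≤ ENNReal.ofReal C * RHS :=
    (ENNReal.mul_le_mul_iff_right hδ0 ENNReal.ofReal_ne_top).mp final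
  refine le_trans hL ?_
  apply mul_le_mul_right
  rw [hRHSdef, hGdef, lintegral_indicator hΩm]
end

section
/- Let d ≥ 1, let Ω ⊂ ℝ^d be a bounded convex open set with positive Lebesgue measure, and let δ > 0. Then there exists a constant C > 0, depending only on Ω and δ, such that for every continuously differentiable function g : Ω → ℝ and every K ∈ ℝ with |{x ∈ Ω : g(x) ≤ K}| ≥ δ, one has ∫_Ω ((g(x) − K)₊)² dx ≤ C ∫_Ω |∇g(x)|² dx. -/
open MeasureTheory
open scoped ENNReal



lemma aux_scale (d : ℕ) (f : (Fin d → ℝ) → ℝ≥0∞) (hf : Measurable f) (c : Fin d → ℝ)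
    {s : ℝ} (hs : s ≠ 0) :
    ∫⁻ x, f (c + s • x) = ENNReal.ofReal |(s ^ d)⁻¹| * ∫⁻ x, f x := by
  have h1 : ∫⁻ x, f (c + s • x) = ∫⁻ y, f (c + y) ∂(Measure.map (s • ·) volume) :=
    (lintegral_map (hf.comp (measurable_const_add c)) (measurable_const_smul s)).symm
  rw [h1, Measure.map_addHaar_smul volume hs, lintegral_smul_measure,
    lintegral_add_left_eq_self f c, Module.finrank_fintype_fun_eq_card, Fintype.card_fin,
    smul_eq_mul]

lemma aux_jensen (h : ℝ → ℝ≥0∞) (hm : AEMeasurable h (volume.restrict (Set.Ioc (0:ℝ) 1))) :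
    (∫⁻ t in Set.Ioc (0:ℝ) 1, h t) ^ 2 ≤ ∫⁻ t in Set.Ioc (0:ℝ) 1, (h t) ^ 2 := by
  have hpq : Real.HolderConjugate 2 2 := Real.HolderConjugate.two_two
  have h1 := ENNReal.lintegral_mul_le_Lp_mul_Lq (volume.restrict (Set.Ioc (0:ℝ) 1)) hpq hm
    aemeasurable_const (g := fun _ => 1)
  simp only [Pi.mul_apply, mul_one, ENNReal.one_rpow, lintegral_const,
    Measure.restrict_apply_univ, Real.volume_Ioc, sub_zero, ENNReal.ofReal_one, one_mul,
    ENNReal.one_rpow] at h1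
  have h2 := pow_le_pow_left' h1 2
  refine h2.trans_eq ?_
  rw [← ENNReal.rpow_natCast _ 2, ← ENNReal.rpow_mul]
  norm_num


lemma aux_point (d : ℕ) (Ω : Set (Fin d → ℝ)) (hbdd : Bornology.IsBounded Ω) (hconv : Convex ℝ Ω) (hopen : IsOpen Ω)
    (g : (Fin d → ℝ) → ℝ) (hg : ContDiffOn ℝ 1 g Ω) (K : ℝ) {x y : Fin d → ℝ}
    (hx : x ∈ Ω) (hy : y ∈ Ω) (hgy : g y ≤ K) :
    max (g x - K) 0 ≤ (Real.sqrt d * Metric.diam Ω) *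
      ∫ t in (0:ℝ)..1, Real.sqrt (∑ i, (fderiv ℝ g (y + t • (x - y)) (Pi.single i 1))^2) := by
  set φ : (Fin d → ℝ) → ℝ := fun z => Real.sqrt (∑ i, (fderiv ℝ g z (Pi.single i 1))^2) with hφ
  set γ : ℝ → (Fin d → ℝ) := fun t => y + t • (x - y) with hγ
  have hγΩ : ∀ t ∈ Set.Icc (0:ℝ) 1, γ t ∈ Ω := fun t ht =>
    hconv.add_smul_sub_mem hy hx ht
  have hγc : Continuous γ := by fun_prop
  -- continuity of fderiv on Ω
  have hfd : ContinuousOn (fun z => fderiv ℝ g z) Ω := by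
    have := hg.continuousOn_fderiv_of_isOpen hopen le_rfl
    exact this
  have hφc : ContinuousOn φ Ω := by
    have hsum : ContinuousOn (fun z => ∑ i, (fderiv ℝ g z (Pi.single i 1))^2) Ω :=
      continuousOn_finset_sum _ fun i _ => ((hfd.clm_apply continuousOn_const)).pow 2
    exact Real.continuous_sqrt.comp_continuousOn hsum
  -- derivative along the segment
  have hder : ∀ t ∈ Set.uIcc (0:ℝ) 1, HasDerivAt (fun t => g (γ t))
      ((fderiv ℝ g (γ t)) (x - y)) t := by
    intro t ht
    rw [Set.uIcc_of_le (by norm_num : (0:ℝ) ≤ 1)] at ht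
    have hmem := hγΩ t ht
    have hdg : DifferentiableAt ℝ g (γ t) :=
      (hg.differentiableOn one_ne_zero).differentiableAt (hopen.mem_nhds hmem)
    have hγd : HasDerivAt γ (x - y) t := by
      have : HasDerivAt (fun s : ℝ => s • (x - y)) ((1:ℝ) • (x - y)) t :=
        (hasDerivAt_id t).smul_const (x - y)
      simpa [hγ] using this.const_add y
    exact hdg.hasFDerivAt.comp_hasDerivAt t hγd
  have hcont : ContinuousOn (fun t => (fderiv ℝ g (γ t)) (x - y)) (Set.uIcc (0:ℝ) 1) := by
    rw [Set.uIcc_of_le (by norm_num : (0:ℝ) ≤ 1)]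
    exact ((hfd.comp hγc.continuousOn (fun t ht => hγΩ t ht)).clm_apply continuousOn_const)
  have hint : IntervalIntegrable (fun t => (fderiv ℝ g (γ t)) (x - y)) volume 0 1 :=
    hcont.intervalIntegrable
  have hftc : g x - g y = ∫ t in (0:ℝ)..1, (fderiv ℝ g (γ t)) (x - y) := by
    have := intervalIntegral.integral_eq_sub_of_hasDerivAt hder hint
    rw [this]
    simp [hγ]
  have hbound : ∀ z : Fin d → ℝ, |(fderiv ℝ g z) (x - y)| ≤ Real.sqrt d * Metric.diam Ω * φ z := by
    intro z
    set L := fderiv ℝ g z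
    set v := x - y with hv
    have hrepr : L v = ∑ i, v i * L (Pi.single i 1) := by
      have hvs : ∑ i, Pi.single i (v i) = v := Finset.univ_sum_single v
      conv_lhs => rw [← hvs]
      rw [map_sum]
      refine Finset.sum_congr rfl fun i _ => ?_
      have hsingle : (Pi.single i (v i) : Fin d → ℝ) = v i • (Pi.single i 1 : Fin d → ℝ) := by
        funext j
        by_cases hj : j = i
        · subst hj; simp
        · simp [Pi.single_apply, hj]
      rw [hsingle, L.map_smul, smul_eq_mul]
    rw [hrepr]
    have h1 : |∑ i, v i * L (Pi.single i 1)| ≤ ∑ i, |v i| * |L (Pi.single i 1)| := by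
      refine (Finset.abs_sum_le_sum_abs _ _).trans ?_
      simp [abs_mul]
    have h2 : ∑ i, |v i| * |L (Pi.single i 1)| ≤
        Real.sqrt (∑ i, |v i| ^ 2) * Real.sqrt (∑ i, |L (Pi.single i 1)| ^ 2) :=
      Real.sum_mul_le_sqrt_mul_sqrt _ _ _
    have h3 : Real.sqrt (∑ i, |L (Pi.single i 1)| ^ 2) = φ z := by
      simp [hφ, sq_abs]
      rfl
    have h4 : Real.sqrt (∑ i, |v i| ^ 2) ≤ Real.sqrt d * Metric.diam Ω := by
      have hsum : ∑ i, |v i| ^ 2 ≤ (d : ℝ) * Metric.diam Ω ^ 2 := by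
        have hbd : ∀ i, |v i| ^ 2 ≤ Metric.diam Ω ^ 2 := by
          intro i
          have h5 : |v i| ≤ dist x y := by
            have := dist_le_pi_dist x y i
            simpa [hv, Real.dist_eq] using this
          have h6 : dist x y ≤ Metric.diam Ω := Metric.dist_le_diam_of_mem hbdd hx hy
          have := h5.trans h6
          exact pow_le_pow_left₀ (abs_nonneg _) this 2
        calc ∑ i, |v i| ^ 2 ≤ ∑ _i : Fin d, Metric.diam Ω ^ 2 :=
              Finset.sum_le_sum fun i _ => hbd i
          _ = (d : ℝ) * Metric.diam Ω ^ 2 := by simp [mul_comm]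
      calc Real.sqrt (∑ i, |v i| ^ 2) ≤ Real.sqrt ((d : ℝ) * Metric.diam Ω ^ 2) :=
            Real.sqrt_le_sqrt hsum
        _ = Real.sqrt d * Metric.diam Ω := by
            rw [Real.sqrt_mul (Nat.cast_nonneg d), Real.sqrt_sq Metric.diam_nonneg]
    calc |∑ i, v i * L (Pi.single i 1)| ≤ _ := h1.trans h2
      _ ≤ Real.sqrt d * Metric.diam Ω * φ z := by
          rw [h3]
          exact mul_le_mul_of_nonneg_right h4 (Real.sqrt_nonneg _)
  -- now combine
  have hφγ : ContinuousOn (fun t => φ (γ t)) (Set.uIcc (0:ℝ) 1) := by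
    rw [Set.uIcc_of_le (by norm_num : (0:ℝ) ≤ 1)]
    exact hφc.comp hγc.continuousOn (fun t ht => hγΩ t ht)
  have hintφ : IntervalIntegrable (fun t => Real.sqrt d * Metric.diam Ω * φ (γ t)) volume 0 1 :=
    (hφγ.intervalIntegrable).const_mul _
  have habs : |g x - g y| ≤ ∫ t in (0:ℝ)..1, Real.sqrt d * Metric.diam Ω * φ (γ t) := by
    rw [hftc]
    refine (intervalIntegral.abs_integral_le_integral_abs (by norm_num)).trans ?_
    refine intervalIntegral.integral_mono_on (by norm_num) hint.abs hintφ ?_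
    intro t _
    exact hbound (γ t)
  have hmax : max (g x - K) 0 ≤ |g x - g y| := by
    rcases le_or_gt (g x - K) 0 with h | h
    · simpa [max_eq_right h] using abs_nonneg (g x - g y)
    · rw [max_eq_left h.le]
      calc g x - K ≤ g x - g y := by linarith
        _ ≤ |g x - g y| := le_abs_self _
  refine hmax.trans (habs.trans ?_)
  rw [intervalIntegral.integral_const_mul]

lemma aux_stepA (d : ℕ) (Ω : Set (Fin d → ℝ)) (hbdd : Bornology.IsBounded Ω)
    (hconv : Convex ℝ Ω) (hopen : IsOpen Ω)
    (g : (Fin d → ℝ) → ℝ) (hg : ContDiffOn ℝ 1 g Ω) (K : ℝ) {x y : Fin d → ℝ}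
    (hx : x ∈ Ω) (hy : y ∈ Ω) (hgy : g y ≤ K)
    (hpt : max (g x - K) 0 ≤ (Real.sqrt d * Metric.diam Ω) *
      ∫ t in (0:ℝ)..1, Real.sqrt (∑ i, (fderiv ℝ g (y + t • (x - y)) (Pi.single i 1))^2)) :
    ENNReal.ofReal ((max (g x - K) 0)^2) ≤
      ENNReal.ofReal ((Real.sqrt d * Metric.diam Ω)^2) *
      ∫⁻ t in Set.Ioc (0:ℝ) 1, (Set.indicator Ω
        (fun z => ENNReal.ofReal (∑ i, (fderiv ℝ g z (Pi.single i 1))^2)) (y + t • (x - y))) := by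
  set A := Real.sqrt d * Metric.diam Ω with hA
  set φ : (Fin d → ℝ) → ℝ := fun z => Real.sqrt (∑ i, (fderiv ℝ g z (Pi.single i 1))^2) with hφ
  set γ : ℝ → (Fin d → ℝ) := fun t => y + t • (x - y) with hγ
  set J := ∫ t in (0:ℝ)..1, φ (γ t) with hJ
  have hγΩ : ∀ t ∈ Set.Icc (0:ℝ) 1, γ t ∈ Ω := fun t ht => hconv.add_smul_sub_mem hy hx ht
  have hγc : Continuous γ := by fun_prop
  have hA0 : 0 ≤ A := mul_nonneg (Real.sqrt_nonneg _) Metric.diam_nonneg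
  have hJ0 : (0:ℝ) ≤ J := intervalIntegral.integral_nonneg (by norm_num)
    (fun t _ => Real.sqrt_nonneg _)
  have hw0 : (0:ℝ) ≤ max (g x - K) 0 := le_max_right _ _
  have h2 : (max (g x - K) 0)^2 ≤ (A * J)^2 := pow_le_pow_left₀ hw0 hpt 2
  -- continuity of φ ∘ γ on Icc
  have hfd : ContinuousOn (fun z => fderiv ℝ g z) Ω := hg.continuousOn_fderiv_of_isOpen hopen le_rfl
  have hφc : ContinuousOn φ Ω := by
    have hsum : ContinuousOn (fun z => ∑ i, (fderiv ℝ g z (Pi.single i 1))^2) Ω :=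
      continuousOn_finset_sum _ fun i _ => ((hfd.clm_apply continuousOn_const)).pow 2
    exact Real.continuous_sqrt.comp_continuousOn hsum
  have hφγ : ContinuousOn (fun t => φ (γ t)) (Set.Icc (0:ℝ) 1) :=
    hφc.comp hγc.continuousOn (fun t ht => hγΩ t ht)
  have meas : AEMeasurable (fun t => ENNReal.ofReal (φ (γ t)))
      (volume.restrict (Set.Ioc (0:ℝ) 1)) :=
    (((hφγ.mono Set.Ioc_subset_Icc_self).aemeasurable measurableSet_Ioc)).ennreal_ofReal
  have hJle : ENNReal.ofReal J ≤ ∫⁻ t in Set.Ioc (0:ℝ) 1, ENNReal.ofReal (φ (γ t)) := by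
    rw [hJ, intervalIntegral.integral_of_le (by norm_num : (0:ℝ) ≤ 1)]
    refine (Real.ofReal_le_enorm _).trans ?_
    refine (enorm_integral_le_lintegral_enorm _).trans_eq ?_
    exact lintegral_congr fun t => Real.enorm_eq_ofReal (Real.sqrt_nonneg _)
  calc ENNReal.ofReal ((max (g x - K) 0)^2) ≤ ENNReal.ofReal ((A * J)^2) :=
        ENNReal.ofReal_le_ofReal h2
    _ = ENNReal.ofReal (A^2) * (ENNReal.ofReal J)^2 := by
        rw [mul_pow, ENNReal.ofReal_mul (sq_nonneg A), ENNReal.ofReal_pow hJ0]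
    _ ≤ ENNReal.ofReal (A^2) * (∫⁻ t in Set.Ioc (0:ℝ) 1, ENNReal.ofReal (φ (γ t)))^2 :=
        mul_le_mul_right (pow_le_pow_left' hJle 2) _
    _ ≤ ENNReal.ofReal (A^2) * ∫⁻ t in Set.Ioc (0:ℝ) 1, (ENNReal.ofReal (φ (γ t)))^2 :=
        mul_le_mul_right (aux_jensen _ meas) _
    _ = ENNReal.ofReal (A^2) * ∫⁻ t in Set.Ioc (0:ℝ) 1, (Set.indicator Ω
        (fun z => ENNReal.ofReal (∑ i, (fderiv ℝ g z (Pi.single i 1))^2)) (γ t)) := by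
        congr 1
        refine setLIntegral_congr_fun measurableSet_Ioc (fun t ht => ?_)
        have hmem : γ t ∈ Ω := hγΩ t (Set.Ioc_subset_Icc_self ht)
        rw [Set.indicator_of_mem hmem, hφ, ← ENNReal.ofReal_pow (Real.sqrt_nonneg _),
          Real.sq_sqrt (Finset.sum_nonneg fun i _ => sq_nonneg _)]


section Main

/-- On a bounded convex open set `Ω ⊂ ℝ^d` of positive measure, for every
`δ > 0` there is `C > 0` such that for every `C¹` function `g` and every level `K` with
`|{g ≤ K}| ≥ δ`, one has `∫_Ω ((g − K)₊)² ≤ C ∫_Ω |∇g|²`. -/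
theorem stmt6 (d : ℕ) (hd : 1 ≤ d) (Ω : Set (Fin d → ℝ))
    (hbdd : Bornology.IsBounded Ω) (hconv : Convex ℝ Ω) (hopen : IsOpen Ω)
    (hvol : 0 < volume Ω) (δ : ℝ) (hδ : 0 < δ) :
    ∃ C > (0:ℝ), ∀ (g : (Fin d → ℝ) → ℝ) (K : ℝ),
      ContDiffOn ℝ 1 g Ω →
      ENNReal.ofReal δ ≤ volume {x ∈ Ω | g x ≤ K} →
      ∫⁻ x in Ω, ENNReal.ofReal ((max (g x - K) 0) ^ 2) ≤
        ENNReal.ofReal C *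
          ∫⁻ x in Ω, ENNReal.ofReal (∑ i, (fderiv ℝ g x (Pi.single i 1)) ^ 2) := by
  classical
  set A := Real.sqrt d * Metric.diam Ω with hA
  have hA0 : 0 ≤ A := mul_nonneg (Real.sqrt_nonneg _) Metric.diam_nonneg
  have hfin : volume Ω < ⊤ := hbdd.measure_lt_top
  set V := (volume Ω).toReal with hV
  have hV0 : 0 ≤ V := ENNReal.toReal_nonneg
  refine ⟨(A^2 * 2^d * V) / δ + 1, by positivity, ?_⟩
  intro g K hg hS
  set Φ : (Fin d → ℝ) → ℝ≥0∞ :=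
    fun z => ENNReal.ofReal (∑ i, (fderiv ℝ g z (Pi.single i 1))^2) with hΦ
  set Φind := Set.indicator Ω Φ with hΦind
  have mΦ : Measurable Φ := by
    apply ENNReal.measurable_ofReal.comp
    exact Finset.measurable_sum _ fun i _ =>
      ((measurable_fderiv_apply_const ℝ (f := g) (Pi.single i 1 : Fin d → ℝ)).pow_const 2)
  have mΦind : Measurable Φind := mΦ.indicator hopen.measurableSet
  set R := ∫⁻ x in Ω, Φ x with hR
  have hΦint : ∫⁻ z, Φind z = R := by
    rw [hΦind, lintegral_indicator hopen.measurableSet]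
  set S := {x ∈ Ω | g x ≤ K} with hSdef
  have hSopen : IsOpen (Ω ∩ g ⁻¹' Set.Ioi K) :=
    hg.continuousOn.isOpen_inter_preimage hopen isOpen_Ioi
  have hSmeas : MeasurableSet S := by
    have hSeq : S = Ω \ (Ω ∩ g ⁻¹' Set.Ioi K) := by
      ext z
      simp only [hSdef, Set.mem_setOf_eq, Set.mem_diff, Set.mem_inter_iff, Set.mem_preimage,
        Set.mem_Ioi, not_and, not_lt]
      tauto
    rw [hSeq]
    exact hopen.measurableSet.diff hSopen.measurableSet
  have hSsub : S ⊆ Ω := fun z hz => hz.1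
  have stepA : ∀ x ∈ Ω, ∀ y ∈ S, ENNReal.ofReal ((max (g x - K) 0)^2) ≤
      ENNReal.ofReal (A^2) * ∫⁻ t in Set.Ioc (0:ℝ) 1, Φind (y + t • (x - y)) :=
    fun x hx y hy => aux_stepA d Ω hbdd hconv hopen g hg K hx hy.1 hy.2
      (aux_point d Ω hbdd hconv hopen g hg K hx hy.1 hy.2)
  have stepB : ∀ x ∈ Ω, ENNReal.ofReal δ * ENNReal.ofReal ((max (g x - K) 0)^2) ≤
      ENNReal.ofReal (A^2) * ∫⁻ y in Ω, ∫⁻ t in Set.Ioc (0:ℝ) 1, Φind (y + t • (x - y)) := by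
    intro x hx
    calc ENNReal.ofReal δ * ENNReal.ofReal ((max (g x - K) 0)^2)
        ≤ volume S * ENNReal.ofReal ((max (g x - K) 0)^2) := mul_le_mul_left hS _
      _ = ∫⁻ _ in S, ENNReal.ofReal ((max (g x - K) 0)^2) := by
          rw [setLIntegral_const, mul_comm]
      _ ≤ ∫⁻ y in S, ENNReal.ofReal (A^2) *
            ∫⁻ t in Set.Ioc (0:ℝ) 1, Φind (y + t • (x - y)) :=
          setLIntegral_mono' hSmeas (fun y hy => stepA x hx y hy)
      _ ≤ ∫⁻ y in Ω, ENNReal.ofReal (A^2) *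
            ∫⁻ t in Set.Ioc (0:ℝ) 1, Φind (y + t • (x - y)) :=
          lintegral_mono' (Measure.restrict_mono hSsub le_rfl) le_rfl
      _ = ENNReal.ofReal (A^2) * ∫⁻ y in Ω, ∫⁻ t in Set.Ioc (0:ℝ) 1, Φind (y + t • (x - y)) :=
          lintegral_const_mul' _ _ ENNReal.ofReal_ne_top
  have key1 : ENNReal.ofReal δ * ∫⁻ x in Ω, ENNReal.ofReal ((max (g x - K) 0)^2) ≤
      ENNReal.ofReal (A^2) * ∫⁻ x in Ω, ∫⁻ y in Ω, ∫⁻ t in Set.Ioc (0:ℝ) 1,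
        Φind (y + t • (x - y)) := by
    rw [← lintegral_const_mul' _ _ ENNReal.ofReal_ne_top,
      ← lintegral_const_mul' _ _ ENNReal.ofReal_ne_top]
    exact setLIntegral_mono' hopen.measurableSet stepB
  -- swaps
  have swap1 : ∀ x : Fin d → ℝ, (∫⁻ y in Ω, ∫⁻ t in Set.Ioc (0:ℝ) 1, Φind (y + t • (x - y))) =
      ∫⁻ t in Set.Ioc (0:ℝ) 1, ∫⁻ y in Ω, Φind (y + t • (x - y)) := by
    intro x
    exact lintegral_lintegral_swap
      ((mΦind.comp (measurable_fst.add
        (measurable_snd.smul (measurable_const.sub measurable_fst)))).aemeasurable)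
  have hG : Measurable (fun p : (Fin d → ℝ) × ℝ => ∫⁻ y in Ω, Φind (y + p.2 • (p.1 - y))) := by
    apply Measurable.lintegral_prod_right'
      (f := fun p : ((Fin d → ℝ) × ℝ) × (Fin d → ℝ) => Φind (p.2 + p.1.2 • (p.1.1 - p.2)))
    exact mΦind.comp (measurable_snd.add
      ((measurable_fst.snd).smul ((measurable_fst.fst).sub measurable_snd)))
  have swap2 : (∫⁻ x in Ω, ∫⁻ t in Set.Ioc (0:ℝ) 1, ∫⁻ y in Ω, Φind (y + t • (x - y))) =
      ∫⁻ t in Set.Ioc (0:ℝ) 1, ∫⁻ x in Ω, ∫⁻ y in Ω, Φind (y + t • (x - y)) :=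
    lintegral_lintegral_swap hG.aemeasurable
  have keyT : ∀ t ∈ Set.Ioc (0:ℝ) 1,
      (∫⁻ x in Ω, ∫⁻ y in Ω, Φind (y + t • (x - y))) ≤ 2^d * (volume Ω * R) := by
    intro t ht
    have h2d : ∀ s : ℝ, s ≠ 0 → s⁻¹ ≤ 2 → 0 < s →
        ENNReal.ofReal |(s^d)⁻¹| ≤ 2^d := by
      intro s hs0 hsle hspos
      have habs : |(s^d)⁻¹| = (s⁻¹)^d := by
        rw [← inv_pow, abs_of_nonneg (by positivity)]
      rw [habs]
      calc ENNReal.ofReal ((s⁻¹)^d) ≤ ENNReal.ofReal ((2:ℝ)^d) :=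
            ENNReal.ofReal_le_ofReal (pow_le_pow_left₀ (by positivity) hsle d)
        _ = 2^d := by rw [ENNReal.ofReal_pow (by norm_num), ENNReal.ofReal_ofNat]
    rcases le_or_gt t (1/2) with hle | hgt
    · have hs0 : (1:ℝ) - t ≠ 0 := by
        have := ht.1; intro h; rw [sub_eq_zero] at h; linarith
      have inner : ∀ x : Fin d → ℝ, (∫⁻ y in Ω, Φind (y + t • (x - y))) ≤ 2^d * R := by
        intro x
        calc ∫⁻ y in Ω, Φind (y + t • (x - y))
            = ∫⁻ y in Ω, Φind (t • x + (1-t) • y) :=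
              lintegral_congr fun y => congrArg Φind (by module)
          _ ≤ ∫⁻ y, Φind (t • x + (1-t) • y) := setLIntegral_le_lintegral _ _
          _ = ENNReal.ofReal |((1-t)^d)⁻¹| * ∫⁻ z, Φind z := aux_scale d Φind mΦind _ hs0
          _ ≤ 2^d * R := by
              rw [hΦint]
              refine mul_le_mul_left (h2d (1-t) hs0 ?_ (by linarith [ht.1])) R
              rw [inv_le_comm₀ (by linarith [ht.1]) (by norm_num)]
              linarith
      calc ∫⁻ x in Ω, ∫⁻ y in Ω, Φind (y + t • (x - y)) ≤ ∫⁻ _ in Ω, 2^d * R :=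
            lintegral_mono fun x => inner x
        _ = 2^d * R * volume Ω := setLIntegral_const _ _
        _ = 2^d * (volume Ω * R) := by ring
    · have ht0 : t ≠ 0 := ne_of_gt ht.1
      have swapxy : (∫⁻ x in Ω, ∫⁻ y in Ω, Φind (y + t • (x - y))) =
          ∫⁻ y in Ω, ∫⁻ x in Ω, Φind (y + t • (x - y)) :=
        lintegral_lintegral_swap ((mΦind.comp (measurable_snd.add
          ((measurable_fst.sub measurable_snd).const_smul t))).aemeasurable)
      rw [swapxy]
      have inner : ∀ y : Fin d → ℝ, (∫⁻ x in Ω, Φind (y + t • (x - y))) ≤ 2^d * R := by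
        intro y
        calc ∫⁻ x in Ω, Φind (y + t • (x - y))
            = ∫⁻ x in Ω, Φind ((1-t) • y + t • x) :=
              lintegral_congr fun x => congrArg Φind (by module)
          _ ≤ ∫⁻ x, Φind ((1-t) • y + t • x) := setLIntegral_le_lintegral _ _
          _ = ENNReal.ofReal |(t^d)⁻¹| * ∫⁻ z, Φind z := aux_scale d Φind mΦind _ ht0
          _ ≤ 2^d * R := by
              rw [hΦint]
              refine mul_le_mul_left (h2d t ht0 ?_ ht.1) R
              rw [inv_le_comm₀ ht.1 (by norm_num)]
              linarith
      calc ∫⁻ y in Ω, ∫⁻ x in Ω, Φind (y + t • (x - y)) ≤ ∫⁻ _ in Ω, 2^d * R :=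
            lintegral_mono fun y => inner y
        _ = 2^d * R * volume Ω := setLIntegral_const _ _
        _ = 2^d * (volume Ω * R) := by ring
  have keyT' : (∫⁻ t in Set.Ioc (0:ℝ) 1, ∫⁻ x in Ω, ∫⁻ y in Ω, Φind (y + t • (x - y))) ≤
      2^d * (volume Ω * R) := by
    calc (∫⁻ t in Set.Ioc (0:ℝ) 1, ∫⁻ x in Ω, ∫⁻ y in Ω, Φind (y + t • (x - y)))
        ≤ ∫⁻ _ in Set.Ioc (0:ℝ) 1, 2^d * (volume Ω * R) := setLIntegral_mono' measurableSet_Ioc keyT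
      _ = 2^d * (volume Ω * R) := by
          rw [setLIntegral_const, Real.volume_Ioc]
          norm_num
  have key : ENNReal.ofReal δ * (∫⁻ x in Ω, ENNReal.ofReal ((max (g x - K) 0)^2)) ≤
      ENNReal.ofReal (A^2) * (2^d * (volume Ω * R)) := by
    refine key1.trans (mul_le_mul_right ?_ _)
    calc (∫⁻ x in Ω, ∫⁻ y in Ω, ∫⁻ t in Set.Ioc (0:ℝ) 1, Φind (y + t • (x - y)))
        = ∫⁻ x in Ω, ∫⁻ t in Set.Ioc (0:ℝ) 1, ∫⁻ y in Ω, Φind (y + t • (x - y)) :=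
          lintegral_congr fun x => swap1 x
      _ = ∫⁻ t in Set.Ioc (0:ℝ) 1, ∫⁻ x in Ω, ∫⁻ y in Ω, Φind (y + t • (x - y)) := swap2
      _ ≤ 2^d * (volume Ω * R) := keyT'
  have hδ0 : ENNReal.ofReal δ ≠ 0 := (ENNReal.ofReal_pos.2 hδ).ne'
  have hcle : (ENNReal.ofReal δ)⁻¹ * (ENNReal.ofReal (A^2) * (2^d * volume Ω)) ≤
      ENNReal.ofReal ((A^2 * 2^d * V)/δ + 1) := by
    rw [← ENNReal.ofReal_inv_of_pos hδ]
    have h2d : (2:ℝ≥0∞)^d = ENNReal.ofReal ((2:ℝ)^d) := by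
      rw [ENNReal.ofReal_pow (by norm_num), ENNReal.ofReal_ofNat]
    have hvol' : volume Ω = ENNReal.ofReal V := (ENNReal.ofReal_toReal hfin.ne).symm
    rw [h2d, hvol', ← ENNReal.ofReal_mul (by positivity),
      ← ENNReal.ofReal_mul (sq_nonneg A), ← ENNReal.ofReal_mul (by positivity)]
    refine ENNReal.ofReal_le_ofReal ?_
    rw [div_eq_mul_inv]
    have heq : δ⁻¹ * (A^2 * ((2:ℝ)^d * V)) = A^2 * 2^d * V * δ⁻¹ := by ring
    linarith
  calc ∫⁻ x in Ω, ENNReal.ofReal ((max (g x - K) 0)^2)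
      = (ENNReal.ofReal δ)⁻¹ * (ENNReal.ofReal δ *
          ∫⁻ x in Ω, ENNReal.ofReal ((max (g x - K) 0)^2)) := by
        rw [← mul_assoc, ENNReal.inv_mul_cancel hδ0 ENNReal.ofReal_ne_top, one_mul]
    _ ≤ (ENNReal.ofReal δ)⁻¹ * (ENNReal.ofReal (A^2) * (2^d * (volume Ω * R))) :=
        mul_le_mul_right key _
    _ = ((ENNReal.ofReal δ)⁻¹ * (ENNReal.ofReal (A^2) * (2^d * volume Ω))) * R := by ring
    _ ≤ ENNReal.ofReal ((A^2 * 2^d * V)/δ + 1) * R := mul_le_mul_left hcle _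

end Main
end

section
/- Let f : (0,∞) → ℝ be differentiable with f(ρ) > 0 for all ρ > 0, and suppose that ρ f'(ρ)/f(ρ) → α as ρ → 0⁺, for some real number α. Then for every η > 0 there exist ρ₀ > 0, c > 0 and C > 0 such that for all ρ ∈ (0, ρ₀]: c ρ^{α+η} ≤ f(ρ) ≤ C ρ^{α−η}. -/
open Filter

/-- If `f > 0` is differentiable on `(0,∞)` and `ρ f'(ρ)/f(ρ) → α` as
`ρ → 0⁺`, then for every `η > 0` there are `ρ₀, c, C > 0` with
`c ρ^{α+η} ≤ f(ρ) ≤ C ρ^{α−η}` for all `ρ ∈ (0, ρ₀]`. -/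
theorem stmt10 (f : ℝ → ℝ)
    (hdiff : ∀ ρ > (0:ℝ), DifferentiableAt ℝ f ρ)
    (hpos : ∀ ρ > (0:ℝ), 0 < f ρ)
    (α : ℝ)
    (hlim : Tendsto (fun ρ => ρ * deriv f ρ / f ρ) (nhdsWithin 0 (Set.Ioi 0)) (nhds α)) :
    ∀ η > (0:ℝ), ∃ ρ₀ > (0:ℝ), ∃ c > (0:ℝ), ∃ C > (0:ℝ),
      ∀ ρ ∈ Set.Ioc (0:ℝ) ρ₀, c * ρ ^ (α + η) ≤ f ρ ∧ f ρ ≤ C * ρ ^ (α - η) := by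
  intro η hη
  have hev : ∀ᶠ ρ in nhdsWithin 0 (Set.Ioi 0),
      dist (ρ * deriv f ρ / f ρ) α < η := Metric.tendsto_nhds.mp hlim η hη
  obtain ⟨δ, hδ, hδsub⟩ := mem_nhdsGT_iff_exists_Ioo_subset.mp hev
  have hδ0 : (0:ℝ) < δ := hδ
  set ρ₀ : ℝ := δ / 2 with hρ₀def
  have hρ₀pos : (0:ℝ) < ρ₀ := by positivity
  have hsub : Set.Ioc (0:ℝ) ρ₀ ⊆ Set.Ioo (0:ℝ) δ := by
    intro x hx
    exact ⟨hx.1, lt_of_le_of_lt hx.2 (by linarith)⟩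
  -- derivative of log f - β log
  have hderiv : ∀ (β : ℝ), ∀ ρ > (0:ℝ),
      HasDerivAt (fun x => Real.log (f x) - β * Real.log x)
        (deriv f ρ / f ρ - β / ρ) ρ := by
    intro β ρ hρ
    have h1 : HasDerivAt (fun x => Real.log (f x)) (deriv f ρ / f ρ) ρ :=
      ((hdiff ρ hρ).hasDerivAt).log (hpos ρ hρ).ne'
    have h2 : HasDerivAt (fun x => β * Real.log x) (β * ρ⁻¹) ρ :=
      (Real.hasDerivAt_log hρ.ne').const_mul β
    have h3 : HasDerivAt (fun x => Real.log (f x) - β * Real.log x)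
        (deriv f ρ / f ρ - β * ρ⁻¹) ρ := h1.sub h2
    simpa [div_eq_mul_inv] using h3
  have hcont : ∀ (β : ℝ), ContinuousOn (fun x => Real.log (f x) - β * Real.log x)
      (Set.Ioc (0:ℝ) ρ₀) := by
    intro β x hx
    exact ((hderiv β x hx.1).continuousAt).continuousWithinAt
  have hIoo : ∀ ρ ∈ Set.Ioo (0:ℝ) δ, |ρ * deriv f ρ / f ρ - α| < η := by
    intro ρ hρ
    have := hδsub hρ
    simpa [Real.dist_eq] using this
  have hint : interior (Set.Ioc (0:ℝ) ρ₀) = Set.Ioo (0:ℝ) ρ₀ := interior_Ioc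
  -- lower bound: h₁ = log f - (α+η) log is antitone on Ioc 0 ρ₀
  have hanti : StrictAntiOn (fun x => Real.log (f x) - (α + η) * Real.log x)
      (Set.Ioc (0:ℝ) ρ₀) := by
    apply strictAntiOn_of_deriv_neg (convex_Ioc 0 ρ₀) (hcont _)
    intro x hx
    rw [hint] at hx
    have hx0 : (0:ℝ) < x := hx.1
    have hxδ : x ∈ Set.Ioo (0:ℝ) δ := ⟨hx0, lt_of_lt_of_le hx.2 (by linarith)⟩
    have habs := hIoo x hxδ
    have hlt : x * deriv f x / f x < α + η := by
      have := abs_lt.mp habs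
      linarith [this.2]
    rw [(hderiv (α + η) x hx0).deriv]
    rw [sub_neg, div_lt_div_iff₀ (hpos x hx0) hx0]
    have : x * deriv f x < (α + η) * f x := by
      have hf := hpos x hx0
      calc x * deriv f x = (x * deriv f x / f x) * f x := by field_simp
        _ < (α + η) * f x := by exact mul_lt_mul_of_pos_right hlt hf
    linarith [this]
  -- upper bound: h₂ = log f - (α-η) log is monotone on Ioc 0 ρ₀
  have hmono : StrictMonoOn (fun x => Real.log (f x) - (α - η) * Real.log x)
      (Set.Ioc (0:ℝ) ρ₀) := by
    apply strictMonoOn_of_deriv_pos (convex_Ioc 0 ρ₀) (hcont _)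
    intro x hx
    rw [hint] at hx
    have hx0 : (0:ℝ) < x := hx.1
    have hxδ : x ∈ Set.Ioo (0:ℝ) δ := ⟨hx0, lt_of_lt_of_le hx.2 (by linarith)⟩
    have habs := hIoo x hxδ
    have hlt : α - η < x * deriv f x / f x := by
      have := abs_lt.mp habs
      linarith [this.1]
    rw [(hderiv (α - η) x hx0).deriv]
    rw [sub_pos, div_lt_div_iff₀ hx0 (hpos x hx0)]
    have : (α - η) * f x < x * deriv f x := by
      have hf := hpos x hx0
      calc (α - η) * f x < (x * deriv f x / f x) * f x :=
            mul_lt_mul_of_pos_right hlt hf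
        _ = x * deriv f x := by field_simp
    linarith [this]
  have hρ₀mem : ρ₀ ∈ Set.Ioc (0:ℝ) ρ₀ := ⟨hρ₀pos, le_refl _⟩
  refine ⟨ρ₀, hρ₀pos,
    Real.exp (Real.log (f ρ₀) - (α + η) * Real.log ρ₀), Real.exp_pos _,
    Real.exp (Real.log (f ρ₀) - (α - η) * Real.log ρ₀), Real.exp_pos _, ?_⟩
  intro ρ hρ
  have hρ0 : (0:ℝ) < ρ := hρ.1
  have h1 : Real.log (f ρ₀) - (α + η) * Real.log ρ₀ ≤
      Real.log (f ρ) - (α + η) * Real.log ρ := by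
    rcases eq_or_lt_of_le hρ.2 with h | h
    · rw [h]
    · exact le_of_lt (hanti hρ hρ₀mem h)
  have h2 : Real.log (f ρ) - (α - η) * Real.log ρ ≤
      Real.log (f ρ₀) - (α - η) * Real.log ρ₀ := by
    rcases eq_or_lt_of_le hρ.2 with h | h
    · rw [h]
    · exact le_of_lt (hmono hρ hρ₀mem h)
  constructor
  · have : Real.exp (Real.log (f ρ₀) - (α + η) * Real.log ρ₀ + (α + η) * Real.log ρ)
        ≤ Real.exp (Real.log (f ρ)) := Real.exp_le_exp.mpr (by linarith)
    rw [Real.exp_log (hpos ρ hρ0), Real.exp_add] at this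
    rwa [Real.rpow_def_of_pos hρ0, mul_comm (Real.log ρ)]
  · have : Real.exp (Real.log (f ρ))
        ≤ Real.exp (Real.log (f ρ₀) - (α - η) * Real.log ρ₀ + (α - η) * Real.log ρ) :=
      Real.exp_le_exp.mpr (by linarith)
    rw [Real.exp_log (hpos ρ hρ0), Real.exp_add] at this
    rwa [Real.rpow_def_of_pos hρ0, mul_comm (Real.log ρ)]
end

section
/- Let μ : [0,∞) → ℝ be continuous on [0,∞) and continuously differentiable on (0,∞) with μ(ρ) > 0 and μ'(ρ) > 0 for every ρ > 0, satisfying the vacuum condition with exponent α ∈ (2/3, 4] and the large-density condition with exponent β ∈ (1,4). Then: (i) the function s ↦ √(μ(s)) μ'(s)/s is Lebesgue integrable on (0, T) for every T > 0, so that Z(ρ) = ∫₀^ρ √(μ(s)) μ'(s)/s ds is well defined and finite for every ρ ≥ 0; and (ii) for every η with 0 < η < β − 2/3 there exist M > 0 and C > 0 such that Z(ρ) ≥ C ρ^{(3(β−η)−2)/2} for all ρ ≥ M; in particular Z(ρ) → ∞ as ρ → ∞. -/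
open Filter MeasureTheory

private lemma sqrt_rpow' (x c : ℝ) (hx : 0 ≤ x) : Real.sqrt (x ^ c) = x ^ (c / 2) := by
  rw [Real.sqrt_eq_rpow, ← Real.rpow_mul hx]; congr 1; ring

private lemma key_ratio (h : ℝ → ℝ) (c a b : ℝ) (ha : 0 < a) (hab : a ≤ b)
    (hposh : ∀ s ∈ Set.Icc a b, 0 < h s)
    (hd : ∀ s ∈ Set.Icc a b, HasDerivAt h (deriv h s) s)
    (hineq : ∀ s ∈ Set.Icc a b, c * h s ≤ s * deriv h s) :
    h a * (b / a) ^ c ≤ h b := by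
  have hb : 0 < b := lt_of_lt_of_le ha hab
  set F : ℝ → ℝ := fun s => Real.log (h s) - c * Real.log s with hF
  have hFd : ∀ s ∈ Set.Icc a b, HasDerivAt F (deriv h s / h s - c * s⁻¹) s := by
    intro s hs
    have hs0 : 0 < s := lt_of_lt_of_le ha hs.1
    exact ((hd s hs).log (ne_of_gt (hposh s hs))).sub
      ((Real.hasDerivAt_log (ne_of_gt hs0)).const_mul c)
  have hmono : MonotoneOn F (Set.Icc a b) := by
    apply monotoneOn_of_deriv_nonneg (convex_Icc a b)
    · exact fun s hs => ((hFd s hs).continuousAt).continuousWithinAt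
    · intro s hs
      rw [interior_Icc] at hs
      exact ((hFd s (Set.mem_Icc_of_Ioo hs)).differentiableAt).differentiableWithinAt
    · intro s hs
      rw [interior_Icc] at hs
      have hs' := Set.mem_Icc_of_Ioo hs
      rw [(hFd s hs').deriv]
      have hs0 : 0 < s := lt_of_lt_of_le ha hs'.1
      have hh0 : 0 < h s := hposh s hs'
      have : c * s⁻¹ ≤ deriv h s / h s := by
        rw [mul_inv_le_iff₀ hs0, div_mul_eq_mul_div, le_div_iff₀ hh0]
        have := hineq s hs'
        nlinarith
      linarith
  have hFab : F a ≤ F b := hmono (Set.left_mem_Icc.2 hab) (Set.right_mem_Icc.2 hab) hab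
  have ha' : 0 < h a := hposh a (Set.left_mem_Icc.2 hab)
  have hb' : 0 < h b := hposh b (Set.right_mem_Icc.2 hab)
  have : h a * (b / a) ^ c = Real.exp (Real.log (h a) + c * (Real.log b - Real.log a)) := by
    rw [Real.exp_add, Real.exp_log ha', Real.rpow_def_of_pos (div_pos hb ha),
      Real.log_div (ne_of_gt hb) (ne_of_gt ha)]
    ring_nf
  rw [this, ← Real.exp_log hb']
  apply Real.exp_le_exp.2
  simp only [hF] at hFab
  linarith

/-- Under the vacuum condition (exponent `α ∈ (2/3,4]`) and large-density
condition (exponent `β ∈ (1,4)`), (i) `s ↦ √(μ(s))μ'(s)/s` is integrable on `(0,T)` for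
every `T > 0` (so `Z(ρ) = ∫₀^ρ √(μ(s))μ'(s)/s ds` is well defined and finite), and
(ii) for every `0 < η < β − 2/3` there are `M, C > 0` with
`Z(ρ) ≥ C ρ^{(3(β−η)−2)/2}` for `ρ ≥ M`; in particular `Z(ρ) → ∞` as `ρ → ∞`. -/
theorem stmt11 (μ : ℝ → ℝ)
    (hcont : ContinuousOn μ (Set.Ici 0))
    (hC1 : ContDiffOn ℝ 1 μ (Set.Ioi 0))
    (hpos : ∀ ρ > (0:ℝ), 0 < μ ρ) (hpos' : ∀ ρ > (0:ℝ), 0 < deriv μ ρ)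
    (α β : ℝ) (hα1 : 2 / 3 < α) (hα2 : α ≤ 4) (hβ1 : 1 < β) (hβ2 : β < 4)
    (hvac : Tendsto (fun ρ => ρ * deriv μ ρ / μ ρ) (nhdsWithin 0 (Set.Ioi 0)) (nhds α))
    (hld : Tendsto (fun ρ => ρ * deriv μ ρ / μ ρ) atTop (nhds β)) :
    (∀ T > (0:ℝ), IntegrableOn (fun s => Real.sqrt (μ s) * deriv μ s / s) (Set.Ioo 0 T)) ∧
    (∀ η, 0 < η → η < β - 2 / 3 → ∃ M > (0:ℝ), ∃ C > (0:ℝ), ∀ ρ ≥ M,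
        (∫ s in (0:ℝ)..ρ, Real.sqrt (μ s) * deriv μ s / s) ≥
          C * ρ ^ ((3 * (β - η) - 2) / 2)) ∧
    Tendsto (fun ρ => ∫ s in (0:ℝ)..ρ, Real.sqrt (μ s) * deriv μ s / s) atTop atTop := by
  have hdiff : ∀ s ∈ Set.Ioi (0:ℝ), HasDerivAt μ (deriv μ s) s := fun s hs =>
    ((hC1.differentiableOn one_ne_zero).differentiableAt (isOpen_Ioi.mem_nhds hs)).hasDerivAt
  have hcd : ContinuousOn (deriv μ) (Set.Ioi 0) :=
    hC1.continuousOn_deriv_of_isOpen isOpen_Ioi le_rfl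
  have hfc : ContinuousOn (fun s => Real.sqrt (μ s) * deriv μ s / s) (Set.Ioi 0) :=
    (((hcont.mono (Set.Ioi_subset_Ici le_rfl)).sqrt).mul hcd).div continuousOn_id
      (fun s hs => ne_of_gt hs)
  have hfnn : ∀ u : ℝ, 0 ≤ u → 0 ≤ Real.sqrt (μ u) * deriv μ u / u := by
    intro u hu
    rcases eq_or_lt_of_le hu with h | h
    · simp [← h]
    · exact div_nonneg (mul_nonneg (Real.sqrt_nonneg _) (hpos' u h).le) h.le
  -- vacuum condition: choose c₁ ∈ (2/3, α) and δ > 0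
  set c₁ := (2/3 + α)/2 with hc₁def
  clear_value c₁
  have hc₁ : 2/3 < c₁ := by rw [hc₁def]; linarith
  have hc₁α : c₁ < α := by rw [hc₁def]; linarith
  have hev : ∀ᶠ s in nhdsWithin 0 (Set.Ioi 0),
      c₁ < s * deriv μ s / μ s ∧ s * deriv μ s / μ s < 5 :=
    (hvac.eventually (eventually_gt_nhds hc₁α)).and
      (hvac.eventually (eventually_lt_nhds (by linarith)))
  obtain ⟨u, hu0, husub⟩ := mem_nhdsGT_iff_exists_Ioo_subset.mp hev
  have hu0' : (0:ℝ) < u := hu0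
  set δ := u/2 with hδdef
  clear_value δ
  have hδ0 : 0 < δ := by rw [hδdef]; linarith
  have hδu : δ < u := by rw [hδdef]; linarith
  have hprops : ∀ s ∈ Set.Ioc (0:ℝ) δ,
      c₁ * μ s ≤ s * deriv μ s ∧ s * deriv μ s ≤ 5 * μ s := by
    intro s hs
    have hs0 : 0 < s := hs.1
    have := husub ⟨hs0, lt_of_le_of_lt hs.2 hδu⟩
    constructor
    · exact le_of_lt ((lt_div_iff₀ (hpos s hs0)).mp this.1)
    · exact le_of_lt ((div_lt_iff₀ (hpos s hs0)).mp this.2)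
  -- bound μ near 0
  set A := μ δ / δ ^ c₁ with hAdef
  clear_value A
  have hA0 : 0 < A := hAdef ▸ div_pos (hpos δ hδ0) (Real.rpow_pos_of_pos hδ0 _)
  have hkey0 : ∀ s ∈ Set.Ioc (0:ℝ) δ, μ s ≤ A * s ^ c₁ := by
    intro s hs
    have hs0 : 0 < s := hs.1
    have hIccsub : Set.Icc s δ ⊆ Set.Ioc 0 δ := fun t ht => ⟨lt_of_lt_of_le hs0 ht.1, ht.2⟩
    have hkr := key_ratio μ c₁ s δ hs0 hs.2
      (fun t ht => hpos t (hIccsub ht).1)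
      (fun t ht => hdiff t (hIccsub ht).1)
      (fun t ht => (hprops t (hIccsub ht)).1)
    rw [Real.div_rpow hδ0.le hs0.le] at hkr
    have h2 : (0:ℝ) < δ ^ c₁ := Real.rpow_pos_of_pos hδ0 _
    have h3 : (0:ℝ) < s ^ c₁ := Real.rpow_pos_of_pos hs0 _
    rw [hAdef, div_mul_eq_mul_div, le_div_iff₀ h2]
    calc μ s * δ ^ c₁ = (μ s * (δ ^ c₁ / s ^ c₁)) * s ^ c₁ := by field_simp
      _ ≤ μ δ * s ^ c₁ := by
          apply mul_le_mul_of_nonneg_right hkr h3.le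
  -- pointwise bound of the integrand near 0
  have hbound0 : ∀ s ∈ Set.Ioo (0:ℝ) δ,
      Real.sqrt (μ s) * deriv μ s / s ≤ 5 * A * Real.sqrt A * s ^ (c₁/2 + c₁ - 2) := by
    intro s hs
    have hs0 : 0 < s := hs.1
    have hsIoc : s ∈ Set.Ioc (0:ℝ) δ := ⟨hs.1, hs.2.le⟩
    have hμle : μ s ≤ A * s ^ c₁ := hkey0 s hsIoc
    have hsqrt : Real.sqrt (μ s) ≤ Real.sqrt A * s ^ (c₁/2) := by
      calc Real.sqrt (μ s) ≤ Real.sqrt (A * s ^ c₁) := Real.sqrt_le_sqrt hμle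
        _ = Real.sqrt A * Real.sqrt (s ^ c₁) := Real.sqrt_mul hA0.le _
        _ = Real.sqrt A * s ^ (c₁/2) := by rw [sqrt_rpow' s c₁ hs0.le]
    have hd5 : deriv μ s * s ≤ 5 * (A * s ^ c₁) := by
      have h1 := (hprops s hsIoc).2
      nlinarith [hμle]
    have e0 : s * s = s ^ (2:ℝ) := by
      rw [show (2:ℝ) = ((2:ℕ):ℝ) by norm_num, Real.rpow_natCast]; ring
    calc Real.sqrt (μ s) * deriv μ s / s
        = Real.sqrt (μ s) * (deriv μ s * s) / (s * s) := by
          field_simp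
      _ ≤ (Real.sqrt A * s ^ (c₁/2)) * (5 * (A * s ^ c₁)) / (s * s) := by
          apply div_le_div_of_nonneg_right ?_ (by positivity)
          exact mul_le_mul hsqrt hd5 (mul_nonneg (hpos' s hs0).le hs0.le) (by positivity)
      _ = 5 * A * Real.sqrt A * s ^ (c₁/2 + c₁ - 2) := by
          rw [e0, show Real.sqrt A * s ^ (c₁/2) * (5 * (A * s ^ c₁)) / s ^ (2:ℝ)
              = 5 * A * Real.sqrt A * (s ^ (c₁/2) * s ^ c₁ / s ^ (2:ℝ)) by ring,
            ← Real.rpow_add hs0, ← Real.rpow_sub hs0]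
  -- integrability on (0, δ)
  have hr : (-1:ℝ) < c₁/2 + c₁ - 2 := by linarith
  have hgint : IntegrableOn (fun s => 5 * A * Real.sqrt A * s ^ (c₁/2 + c₁ - 2))
      (Set.Ioo 0 δ) := by
    have h1 : IntervalIntegrable (fun s:ℝ => s ^ (c₁/2 + c₁ - 2)) volume 0 δ :=
      intervalIntegral.intervalIntegrable_rpow' hr
    exact ((intervalIntegrable_iff_integrableOn_Ioo_of_le hδ0.le).mp h1).const_mul _
  have hIoo : IntegrableOn (fun s => Real.sqrt (μ s) * deriv μ s / s) (Set.Ioo 0 δ) := by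
    apply Integrable.mono' hgint
      ((hfc.mono (fun x hx => hx.1)).aestronglyMeasurable measurableSet_Ioo)
    rw [ae_restrict_iff' measurableSet_Ioo]
    filter_upwards with s hs
    rw [Real.norm_eq_abs, abs_of_nonneg (hfnn s hs.1.le)]
    exact hbound0 s hs
  -- Part (i)
  have hint : ∀ T > (0:ℝ), IntegrableOn (fun s => Real.sqrt (μ s) * deriv μ s / s)
      (Set.Ioo 0 T) := by
    intro T hT
    rcases le_total T δ with h | h
    · exact hIoo.mono_set (Set.Ioo_subset_Ioo le_rfl h)
    · have h2 : IntegrableOn (fun s => Real.sqrt (μ s) * deriv μ s / s) (Set.Icc δ T) :=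
        (hfc.mono (fun x hx => lt_of_lt_of_le hδ0 hx.1)).integrableOn_Icc
      refine (hIoo.union h2).mono_set ?_
      intro x hx
      rcases lt_or_ge x δ with h3 | h3
      · exact Or.inl ⟨hx.1, h3⟩
      · exact Or.inr ⟨h3, hx.2.le⟩
  -- Part (ii)
  have hpart2 : ∀ η, 0 < η → η < β - 2 / 3 → ∃ M > (0:ℝ), ∃ C > (0:ℝ), ∀ ρ ≥ M,
      (∫ s in (0:ℝ)..ρ, Real.sqrt (μ s) * deriv μ s / s) ≥
        C * ρ ^ ((3 * (β - η) - 2) / 2) := by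
    intro η hη1 hη2
    set c₂ := β - η/2 with hc₂def
    clear_value c₂
    have hc₂ : 2/3 < c₂ := by rw [hc₂def]; linarith
    have hev2 : ∀ᶠ s in atTop, c₂ < s * deriv μ s / μ s :=
      hld.eventually (eventually_gt_nhds (by rw [hc₂def]; linarith))
    obtain ⟨M₀', hM₀'⟩ := eventually_atTop.mp hev2
    set M₀ := max M₀' 1 with hM₀def
    clear_value M₀
    have hM₀1 : (1:ℝ) ≤ M₀ := hM₀def ▸ le_max_right _ _
    have hM₀l : M₀' ≤ M₀ := hM₀def ▸ le_max_left _ _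
    have hM₀0 : (0:ℝ) < M₀ := lt_of_lt_of_le one_pos hM₀1
    have hratio : ∀ s, M₀ ≤ s → c₂ * μ s ≤ s * deriv μ s := by
      intro s hsM
      have hs0 : 0 < s := lt_of_lt_of_le hM₀0 hsM
      exact le_of_lt ((lt_div_iff₀ (hpos s hs0)).mp
        (hM₀' s (le_trans hM₀l hsM)))
    set k := μ M₀ / M₀ ^ c₂ with hkdef
    clear_value k
    have hk0 : 0 < k := hkdef ▸ div_pos (hpos M₀ hM₀0) (Real.rpow_pos_of_pos hM₀0 _)
    have hlow : ∀ s, M₀ ≤ s → k * s ^ c₂ ≤ μ s := by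
      intro s hsM
      have hs0 : 0 < s := lt_of_lt_of_le hM₀0 hsM
      have hIccsub : Set.Icc M₀ s ⊆ Set.Ici M₀ := fun t ht => ht.1
      have hkr := key_ratio μ c₂ M₀ s hM₀0 hsM
        (fun t ht => hpos t (lt_of_lt_of_le hM₀0 ht.1))
        (fun t ht => hdiff t (lt_of_lt_of_le hM₀0 ht.1))
        (fun t ht => hratio t ht.1)
      rw [Real.div_rpow hs0.le hM₀0.le] at hkr
      calc k * s ^ c₂ = μ M₀ * (s ^ c₂ / M₀ ^ c₂) := by rw [hkdef]; ring
        _ ≤ μ s := hkr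
    -- lower bound for the integrand
    have hflow : ∀ s, M₀ ≤ s →
        c₂ * k * Real.sqrt k * s ^ (c₂/2 + c₂ - 2) ≤ Real.sqrt (μ s) * deriv μ s / s := by
      intro s hsM
      have hs0 : 0 < s := lt_of_lt_of_le hM₀0 hsM
      have h1 : Real.sqrt k * s ^ (c₂/2) ≤ Real.sqrt (μ s) := by
        calc Real.sqrt k * s ^ (c₂/2) = Real.sqrt (k * s ^ c₂) := by
              rw [Real.sqrt_mul hk0.le, sqrt_rpow' s c₂ hs0.le]
          _ ≤ Real.sqrt (μ s) := Real.sqrt_le_sqrt (hlow s hsM)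
      have h2 : c₂ * (k * s ^ c₂) / s ≤ deriv μ s := by
        rw [div_le_iff₀ hs0, mul_comm (deriv μ s) s]
        have h5 : c₂ * (k * s ^ c₂) ≤ c₂ * μ s :=
          mul_le_mul_of_nonneg_left (hlow s hsM) (by linarith [hc₂])
        linarith [hratio s hsM]
      have e0 : s * s = s ^ (2:ℝ) := by
        rw [show (2:ℝ) = ((2:ℕ):ℝ) by norm_num, Real.rpow_natCast]; ring
      calc c₂ * k * Real.sqrt k * s ^ (c₂/2 + c₂ - 2)
          = (Real.sqrt k * s ^ (c₂/2)) * (c₂ * (k * s ^ c₂) / s) / s := by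
            rw [show (Real.sqrt k * s ^ (c₂/2)) * (c₂ * (k * s ^ c₂) / s) / s
                = c₂ * k * Real.sqrt k * (s ^ (c₂/2) * s ^ c₂ / (s * s)) by ring,
              e0, ← Real.rpow_add hs0, ← Real.rpow_sub hs0]
        _ ≤ Real.sqrt (μ s) * deriv μ s / s := by
            apply div_le_div_of_nonneg_right ?_ hs0.le
            apply mul_le_mul h1 h2 (by positivity) (Real.sqrt_nonneg _)
    -- choose M
    have hq : (-1:ℝ) < c₂/2 + c₂ - 2 := by linarith
    have hq1 : (0:ℝ) < c₂/2 + c₂ - 2 + 1 := by linarith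
    have hMev : ∀ᶠ ρ in atTop, M₀ ≤ ρ ∧ 1 ≤ ρ ∧
        2 * M₀ ^ (c₂/2 + c₂ - 2 + 1) ≤ ρ ^ (c₂/2 + c₂ - 2 + 1) :=
      (eventually_ge_atTop M₀).and ((eventually_ge_atTop 1).and
        ((tendsto_rpow_atTop hq1).eventually_ge_atTop _))
    obtain ⟨M, hM⟩ := eventually_atTop.mp hMev
    have hK0 : 0 < c₂ * k * Real.sqrt k :=
      mul_pos (mul_pos (by linarith) hk0) (Real.sqrt_pos.2 hk0)
    refine ⟨max M 1, lt_of_lt_of_le one_pos (le_max_right _ _),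
      c₂ * k * Real.sqrt k / (2 * (c₂/2 + c₂ - 2 + 1)), div_pos hK0 (by linarith), ?_⟩
    intro ρ hρ
    obtain ⟨hρM₀, hρ1, hρq⟩ := hM ρ (le_trans (le_max_left _ _) hρ)
    have hρ0 : (0:ℝ) < ρ := lt_of_lt_of_le one_pos hρ1
    -- split the integral
    have hi1 : IntervalIntegrable (fun s => Real.sqrt (μ s) * deriv μ s / s) volume 0 M₀ := by
      rw [intervalIntegrable_iff_integrableOn_Ioc_of_le hM₀0.le]
      exact (hint (M₀+1) (by linarith)).mono_set
        (fun x hx => ⟨hx.1, lt_of_le_of_lt hx.2 (by linarith)⟩)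
    have hi2 : IntervalIntegrable (fun s => Real.sqrt (μ s) * deriv μ s / s) volume M₀ ρ :=
      ContinuousOn.intervalIntegrable_of_Icc hρM₀
        (hfc.mono (fun x hx => lt_of_lt_of_le hM₀0 hx.1))
    have hsplit := intervalIntegral.integral_add_adjacent_intervals hi1 hi2
    have h01 : 0 ≤ ∫ s in (0:ℝ)..M₀, Real.sqrt (μ s) * deriv μ s / s :=
      intervalIntegral.integral_nonneg hM₀0.le (fun s hs => hfnn s hs.1)
    have hi3 : IntervalIntegrable (fun s => c₂ * k * Real.sqrt k * s ^ (c₂/2 + c₂ - 2))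
        volume M₀ ρ := (intervalIntegral.intervalIntegrable_rpow' hq).const_mul _
    have hcomp : (∫ s in M₀..ρ, c₂ * k * Real.sqrt k * s ^ (c₂/2 + c₂ - 2)) ≤
        ∫ s in M₀..ρ, Real.sqrt (μ s) * deriv μ s / s :=
      intervalIntegral.integral_mono_on hρM₀ hi3 hi2 (fun s hs => hflow s hs.1)
    have hval : (∫ s in M₀..ρ, c₂ * k * Real.sqrt k * s ^ (c₂/2 + c₂ - 2)) =
        c₂ * k * Real.sqrt k *
          ((ρ ^ (c₂/2 + c₂ - 2 + 1) - M₀ ^ (c₂/2 + c₂ - 2 + 1)) / (c₂/2 + c₂ - 2 + 1)) := by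
      rw [intervalIntegral.integral_const_mul, integral_rpow (Or.inl hq)]
    rw [ge_iff_le]
    have hx : ρ ^ ((3 * (β - η) - 2) / 2) ≤ ρ ^ (c₂/2 + c₂ - 2 + 1) :=
      Real.rpow_le_rpow_of_exponent_le hρ1 (by rw [hc₂def]; linarith)
    have hM₀q : (0:ℝ) ≤ M₀ ^ (c₂/2 + c₂ - 2 + 1) := Real.rpow_nonneg hM₀0.le _
    calc c₂ * k * Real.sqrt k / (2 * (c₂/2 + c₂ - 2 + 1)) * ρ ^ ((3 * (β - η) - 2) / 2)
        ≤ c₂ * k * Real.sqrt k / (2 * (c₂/2 + c₂ - 2 + 1)) * ρ ^ (c₂/2 + c₂ - 2 + 1) := by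
          apply mul_le_mul_of_nonneg_left hx (le_of_lt (div_pos hK0 (by linarith)))
      _ ≤ c₂ * k * Real.sqrt k *
          ((ρ ^ (c₂/2 + c₂ - 2 + 1) - M₀ ^ (c₂/2 + c₂ - 2 + 1)) / (c₂/2 + c₂ - 2 + 1)) := by
          rw [show c₂ * k * Real.sqrt k / (2 * (c₂/2 + c₂ - 2 + 1)) * ρ ^ (c₂/2 + c₂ - 2 + 1)
              = c₂ * k * Real.sqrt k * ((ρ ^ (c₂/2 + c₂ - 2 + 1) / 2) / (c₂/2 + c₂ - 2 + 1))
              by field_simp]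
          apply mul_le_mul_of_nonneg_left ?_ hK0.le
          apply div_le_div_of_nonneg_right ?_ hq1.le
          linarith
      _ = ∫ s in M₀..ρ, c₂ * k * Real.sqrt k * s ^ (c₂/2 + c₂ - 2) := hval.symm
      _ ≤ ∫ s in M₀..ρ, Real.sqrt (μ s) * deriv μ s / s := hcomp
      _ ≤ ∫ s in (0:ℝ)..ρ, Real.sqrt (μ s) * deriv μ s / s := by
          rw [← hsplit]; linarith
  -- Part (iii)
  refine ⟨hint, hpart2, ?_⟩
  obtain ⟨M, hMpos, C, hC, hbd⟩ := hpart2 ((β - 2/3)/2) (by linarith) (by linarith)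
  have hp : (0:ℝ) < (3 * (β - (β - 2/3)/2) - 2) / 2 := by linarith
  apply tendsto_atTop_mono' atTop ?_ ((tendsto_rpow_atTop hp).const_mul_atTop hC)
  filter_upwards [eventually_ge_atTop M] with ρ hρ using hbd ρ hρ
end

section
/- Let μ : [0,∞) → ℝ be continuous on [0,∞) and continuously differentiable on (0,∞) with μ(ρ) > 0 and μ'(ρ) > 0 for every ρ > 0, satisfying the vacuum condition with exponent α ∈ (2/3, 4]. Then there exist σ > 0, C > 0 and ρ₀ > 0 such that for all ρ ∈ (0, ρ₀]: √(μ(ρ)) μ'(ρ)/ρ ≥ C ρ^{σ−1}. -/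
open Filter

/-- If `μ` satisfies the vacuum condition with exponent `α ∈ (2/3, 4]`, then
near `0` the derivative `Z'(ρ) = √(μ(ρ)) μ'(ρ)/ρ` is bounded below by `C ρ^{σ−1}` for some
`σ > 0`. -/
theorem stmt12 (μ : ℝ → ℝ)
    (hcont : ContinuousOn μ (Set.Ici 0))
    (hC1 : ContDiffOn ℝ 1 μ (Set.Ioi 0))
    (hpos : ∀ ρ > (0:ℝ), 0 < μ ρ) (hpos' : ∀ ρ > (0:ℝ), 0 < deriv μ ρ)
    (α : ℝ) (hα1 : 2 / 3 < α) (hα2 : α ≤ 4)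
    (hvac : Tendsto (fun ρ => ρ * deriv μ ρ / μ ρ) (nhdsWithin 0 (Set.Ioi 0)) (nhds α)) :
    ∃ σ > (0:ℝ), ∃ C > (0:ℝ), ∃ ρ₀ > (0:ℝ), ∀ ρ ∈ Set.Ioc (0:ℝ) ρ₀,
      Real.sqrt (μ ρ) * deriv μ ρ / ρ ≥ C * ρ ^ (σ - 1) := by
  have hα0 : (0:ℝ) < α := lt_trans (by norm_num) hα1
  rw [Metric.tendsto_nhdsWithin_nhds] at hvac
  obtain ⟨δ, hδ, hδ'⟩ := hvac (α/2) (by positivity)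
  set ρ₀ := δ/2 with hρ₀def
  have hρ₀ : 0 < ρ₀ := by positivity
  -- key bounds on Ioc 0 ρ₀
  have key : ∀ x ∈ Set.Ioc (0:ℝ) ρ₀,
      α/2 * (μ x / x) ≤ deriv μ x ∧ x * deriv μ x ≤ 2*α * μ x := by
    intro x hx
    have hx0 := hx.1
    have hμx := hpos x hx0
    have hdist : dist x 0 < δ := by
      rw [Real.dist_eq, sub_zero, abs_of_pos hx0]
      have := hx.2; rw [hρ₀def] at this; linarith
    have h := hδ' hx0 hdist
    rw [Real.dist_eq] at h
    have h' := abs_lt.1 h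
    constructor
    · have h1 : α/2 < x * deriv μ x / μ x := by linarith [h'.1]
      rw [lt_div_iff₀ hμx] at h1
      rw [mul_div_assoc', div_le_iff₀ hx0]
      nlinarith
    · have h2 : x * deriv μ x / μ x < 2*α := by linarith [h'.2]
      rw [div_lt_iff₀ hμx] at h2
      nlinarith
  -- differentiability of μ
  have hdiff : ∀ x ∈ Set.Ioi (0:ℝ), HasDerivAt μ (deriv μ x) x := fun x hx =>
    (((hC1.differentiableOn one_ne_zero).differentiableAt (Ioi_mem_nhds hx))).hasDerivAt
  set β := 2*α with hβdef
  set f : ℝ → ℝ := fun x => μ x * x ^ (-β) with hfdef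
  have hf' : ∀ x ∈ Set.Ioi (0:ℝ),
      HasDerivAt f (x ^ (-β-1) * (x * deriv μ x - β * μ x)) x := by
    intro x hx
    have hx0 : (0:ℝ) < x := hx
    have h1 : HasDerivAt (fun y : ℝ => y ^ (-β)) (-β * x ^ (-β - 1)) x :=
      Real.hasDerivAt_rpow_const (Or.inl hx0.ne')
    have h2 := (hdiff x hx).mul h1
    convert h2 using 1
    any_goals rfl
    have hx' : x ^ (-β) = x ^ (-β-1) * x := by
      rw [← Real.rpow_add_one hx0.ne' (-β-1)]
      congr 1
      ring
    rw [hx']; ring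
  -- f is antitone, hence μ x ≥ c x^β
  set c : ℝ := μ ρ₀ * ρ₀ ^ (-β) with hcdef
  have hc : 0 < c := by
    have h1 := hpos ρ₀ hρ₀
    have h2 : (0:ℝ) < ρ₀ ^ (-β) := Real.rpow_pos_of_pos hρ₀ _
    positivity
  have hμlb : ∀ ρ ∈ Set.Ioc (0:ℝ) ρ₀, c * ρ ^ β ≤ μ ρ := by
    intro ρ hρ
    have hρ0 := hρ.1
    have hsub : Set.Icc ρ ρ₀ ⊆ Set.Ioi 0 := fun y hy => lt_of_lt_of_le hρ0 hy.1
    have hconf : ContinuousOn f (Set.Icc ρ ρ₀) := fun y hy =>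
      ((hf' y (hsub hy)).continuousAt).continuousWithinAt
    have hint : interior (Set.Icc ρ ρ₀) ⊆ Set.Ioo ρ ρ₀ := by
      rw [interior_Icc]
    have hdf : DifferentiableOn ℝ f (interior (Set.Icc ρ ρ₀)) := fun y hy =>
      ((hf' y (hsub (Set.Ioo_subset_Icc_self (hint hy)))).differentiableAt).differentiableWithinAt
    have hnp : ∀ y ∈ interior (Set.Icc ρ ρ₀), deriv f y ≤ 0 := by
      intro y hy
      have hy' := hint hy
      have hy0 : (0:ℝ) < y := lt_trans hρ0 hy'.1
      rw [(hf' y hy0).deriv]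
      have hk := (key y ⟨hy0, hy'.2.le⟩).2
      have hyp : (0:ℝ) < y ^ (-β-1) := Real.rpow_pos_of_pos hy0 _
      have hsub0 : y * deriv μ y - β * μ y ≤ 0 := by linarith
      exact mul_nonpos_of_nonneg_of_nonpos hyp.le hsub0
    have hanti := antitoneOn_of_deriv_nonpos (convex_Icc ρ ρ₀) hconf hdf hnp
    have hle : f ρ₀ ≤ f ρ :=
      hanti (Set.left_mem_Icc.2 hρ.2) (Set.right_mem_Icc.2 hρ.2) hρ.2
    have hρβ : (0:ℝ) < ρ ^ β := Real.rpow_pos_of_pos hρ0 _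
    have h3 : c ≤ μ ρ * ρ ^ (-β) := hle
    calc c * ρ ^ β ≤ (μ ρ * ρ ^ (-β)) * ρ ^ β := by nlinarith
      _ = μ ρ := by
          rw [mul_assoc, ← Real.rpow_add hρ0]; simp
  -- conclusion
  refine ⟨3*α - 1, by linarith, α/2 * Real.sqrt c * c, by positivity, ρ₀, hρ₀, ?_⟩
  intro ρ hρ
  have hρ0 := hρ.1
  have hμρ := hpos ρ hρ0
  have hlb := hμlb ρ hρ
  have hk := (key ρ hρ).1
  -- sqrt bound
  have hsqrt : Real.sqrt c * ρ ^ α ≤ Real.sqrt (μ ρ) := by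
    have h1 : Real.sqrt (c * ρ ^ β) ≤ Real.sqrt (μ ρ) := Real.sqrt_le_sqrt hlb
    have h2 : Real.sqrt (c * ρ ^ β) = Real.sqrt c * ρ ^ α := by
      rw [Real.sqrt_mul hc.le, Real.sqrt_eq_rpow (ρ ^ β), ← Real.rpow_mul hρ0.le]
      have hexp : β * (1/2 : ℝ) = α := by rw [hβdef]; ring
      rw [hexp]
    rw [← h2]; exact h1
  have hderiv : α/2 * c * ρ ^ (β-1) ≤ deriv μ ρ := by
    have e2 : α/2 * c * ρ ^ (β-1) = α/2 * (c * ρ ^ β / ρ) := by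
      rw [Real.rpow_sub hρ0, Real.rpow_one]; ring
    rw [e2]
    refine le_trans ?_ hk
    gcongr
  have e1 : ρ ^ (3*α-1-1) = ρ ^ α * ρ ^ (β-1) / ρ := by
    rw [← Real.rpow_add hρ0]
    have hexp : (3*α-1-1 : ℝ) = (α + (β-1)) - 1 := by rw [hβdef]; ring
    rw [hexp, Real.rpow_sub hρ0, Real.rpow_one]
  rw [ge_iff_le]
  calc α/2 * Real.sqrt c * c * ρ ^ (3*α-1-1)
      = (Real.sqrt c * ρ ^ α) * (α/2 * c * ρ ^ (β-1)) / ρ := by rw [e1]; ring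
    _ ≤ Real.sqrt (μ ρ) * deriv μ ρ / ρ := by
        gcongr <;> positivity
end

section
/- Let (X, m) be a measure space with m(X) = 1, and let g : X → ℝ be measurable with g ≥ 1 almost everywhere and g³ integrable. Set M₁ = ∫_X g dm. Then ln( ∫_X g³ dm ) ≥ (2/M₁) ∫_X g ln g dm. -/
open MeasureTheory

/-- On a probability space, for measurable `g ≥ 1` a.e. with `g³` integrable
and `M₁ = ∫ g`, one has `ln(∫ g³) ≥ (2/M₁) ∫ g ln g` (the Jensen step of the generalized
log-Sobolev argument). -/
theorem stmt14 {X : Type*} [MeasurableSpace X] (m : Measure X) [IsProbabilityMeasure m]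
    (g : X → ℝ) (hmeas : Measurable g) (hge : ∀ᵐ x ∂m, 1 ≤ g x)
    (hint : Integrable (fun x => (g x) ^ 3) m) :
    Real.log (∫ x, (g x) ^ 3 ∂m) ≥ (2 / ∫ x, g x ∂m) * ∫ x, g x * Real.log (g x) ∂m := by
  -- integrability of g
  have hcube : ∀ a : ℝ, 1 ≤ a → a ≤ a ^ 3 ∧ a ^ 2 ≤ a ^ 3 := by
    intro a ha
    have h0 : (0:ℝ) ≤ a := le_trans zero_le_one ha
    have h2 : 1 ≤ a ^ 2 := by nlinarith
    constructor
    · nlinarith [mul_le_mul_of_nonneg_left h2 h0]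
    · nlinarith [mul_le_mul_of_nonneg_left ha (sq_nonneg a)]
  have hg_int : Integrable g m := by
    refine hint.mono hmeas.aestronglyMeasurable ?_
    filter_upwards [hge] with x hx
    obtain ⟨h3, _⟩ := hcube (g x) hx
    simp only [Real.norm_eq_abs]
    rw [abs_of_nonneg (by linarith), abs_of_nonneg (by linarith)]
    linarith
  set M₁ := ∫ x, g x ∂m with hM₁def
  set I := ∫ x, (g x) ^ 3 ∂m with hIdef
  have h1 : (∫ _x, (1:ℝ) ∂m) = 1 := by simp
  have hM1 : 1 ≤ M₁ := by
    rw [← h1]; exact integral_mono_ae (integrable_const 1) hg_int hge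
  have hI1 : 1 ≤ I := by
    rw [← h1]
    refine integral_mono_ae (integrable_const 1) hint ?_
    filter_upwards [hge] with x hx
    obtain ⟨h3, _⟩ := hcube (g x) hx; linarith
  have hM1pos : (0:ℝ) < M₁ := by linarith
  have hIpos : (0:ℝ) < I := by linarith
  set A := I / M₁ with hAdef
  have hApos : 0 < A := div_pos hIpos hM1pos
  -- integrability of g log g
  have hgl_int : Integrable (fun x => g x * Real.log (g x)) m := by
    refine hint.mono (hmeas.mul hmeas.log).aestronglyMeasurable ?_
    filter_upwards [hge] with x hx
    have hlog0 : 0 ≤ Real.log (g x) := Real.log_nonneg hx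
    have hlog1 : Real.log (g x) ≤ g x - 1 :=
      Real.log_le_sub_one_of_pos (by linarith)
    obtain ⟨h3, h4⟩ := hcube (g x) hx
    simp only [Real.norm_eq_abs]
    rw [abs_of_nonneg (by positivity), abs_of_nonneg (by linarith)]
    nlinarith
  -- pointwise Jensen-type inequality
  have hpt : ∀ᵐ x ∂m, 2 * (g x * Real.log (g x)) ≤
      g x * Real.log A + (g x) ^ 3 / A - g x := by
    filter_upwards [hge] with x hx
    have hgpos : 0 < g x := by linarith
    have hkey : Real.log ((g x) ^ 2 / A) ≤ (g x) ^ 2 / A - 1 :=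
      Real.log_le_sub_one_of_pos (by positivity)
    rw [Real.log_div (by positivity) (ne_of_gt hApos), Real.log_pow] at hkey
    -- hkey : 2 * log (g x) - log A ≤ (g x)^2 / A - 1
    have := mul_le_mul_of_nonneg_left hkey (le_of_lt hgpos)
    have hexp : g x * ((g x) ^ 2 / A - 1) = (g x) ^ 3 / A - g x := by
      field_simp
    push_cast at this
    have h5 : g x * (2 * Real.log (g x)) - g x * Real.log A ≤ (g x) ^ 3 / A - g x := by
      rw [← mul_sub, ← hexp]; exact this
    have h6 : 2 * (g x * Real.log (g x)) = g x * (2 * Real.log (g x)) := by ring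
    rw [h6]; linarith
  -- integrate
  have hRHS_int : Integrable (fun x => g x * Real.log A + (g x) ^ 3 / A - g x) m :=
    ((hg_int.mul_const _).add (hint.div_const _)).sub hg_int
  have hLHS_int : Integrable (fun x => 2 * (g x * Real.log (g x))) m :=
    hgl_int.const_mul 2
  have hineq := integral_mono_ae hLHS_int hRHS_int hpt
  rw [integral_const_mul] at hineq
  have hRHS_val : (∫ x, (g x * Real.log A + (g x) ^ 3 / A - g x) ∂m)
      = M₁ * Real.log A + I / A - M₁ := by
    have hi1 : Integrable (fun x => g x * Real.log A + (g x) ^ 3 / A) m :=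
      (hg_int.mul_const _).add (hint.div_const _)
    have hi2 : Integrable (fun x => g x * Real.log A) m := hg_int.mul_const _
    rw [integral_sub hi1 hg_int, integral_add hi2 (hint.div_const _),
      integral_mul_const, integral_div]
  rw [hRHS_val] at hineq
  have hIA : I / A = M₁ := by
    rw [hAdef]; field_simp
  rw [hIA] at hineq
  -- hineq : 2 * ∫ g log g ≤ M₁ * log A + M₁ - M₁
  have hlogA : Real.log A = Real.log I - Real.log M₁ :=
    Real.log_div (ne_of_gt hIpos) (ne_of_gt hM1pos)
  have hlogM1 : 0 ≤ Real.log M₁ := Real.log_nonneg hM1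
  have hfinal : 2 * (∫ x, g x * Real.log (g x) ∂m) ≤ M₁ * Real.log I := by
    have : M₁ * Real.log A ≤ M₁ * Real.log I := by
      rw [hlogA]; nlinarith
    linarith
  rw [ge_iff_le, div_mul_eq_mul_div, div_le_iff₀ hM1pos]
  linarith
end

section
/- Let α₂ > 0 and let μ : (0,∞) → ℝ be differentiable with μ'(s) ≥ 0 and s μ'(s) ≤ α₂ μ(s) for all s > 0. Then for every ρ ≥ 1: ρ ∫₁^ρ μ(s)/s² ds ≥ ( μ(ρ) − μ(1) ) / α₂. -/
open intervalIntegral MeasureTheory Set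

/-- If `μ' ≥ 0` and `s μ'(s) ≤ α₂ μ(s)` for all `s > 0` (with `α₂ > 0`),
then for every `ρ ≥ 1`, `ρ ∫₁^ρ μ(s)/s² ds ≥ (μ(ρ) − μ(1))/α₂`. -/
theorem stmt16 (α₂ : ℝ) (hα₂ : 0 < α₂) (μ : ℝ → ℝ)
    (hdiff : ∀ s > (0:ℝ), DifferentiableAt ℝ μ s)
    (hderiv_nn : ∀ s > (0:ℝ), 0 ≤ deriv μ s)
    (hstruct : ∀ s > (0:ℝ), s * deriv μ s ≤ α₂ * μ s) :
    ∀ ρ ≥ (1:ℝ), ρ * ∫ s in (1:ℝ)..ρ, μ s / s ^ 2 ≥ (μ ρ - μ 1) / α₂ := by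
  intro ρ hρ
  have hρ0 : (0:ℝ) < ρ := lt_of_lt_of_le one_pos hρ
  -- μ is nonneg on (0,∞)
  have hμnn : ∀ s > (0:ℝ), 0 ≤ μ s := by
    intro s hs
    have h1 := hstruct s hs
    have h2 : 0 ≤ s * deriv μ s := mul_nonneg hs.le (hderiv_nn s hs)
    nlinarith
  -- continuity of μ on [1,ρ]
  have hcont : ContinuousOn μ (Icc 1 ρ) := fun x hx =>
    ((hdiff x (lt_of_lt_of_le one_pos hx.1)).continuousAt).continuousWithinAt
  have hcontφ : ContinuousOn (fun s => α₂ * μ s / s) (Icc 1 ρ) := by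
    apply ContinuousOn.div (continuousOn_const.mul hcont) continuousOn_id
    intro x hx; exact ne_of_gt (lt_of_lt_of_le one_pos hx.1)
  have hφint : IntegrableOn (fun s => α₂ * μ s / s) (Icc 1 ρ) :=
    hcontφ.integrableOn_compact isCompact_Icc
  -- μ ρ - μ 1 ≤ ∫ α₂ μ s / s
  have key : μ ρ - μ 1 ≤ ∫ s in (1:ℝ)..ρ, α₂ * μ s / s := by
    apply sub_le_integral_of_hasDeriv_right_of_le hρ hcont
      (g' := deriv μ) _ hφint
    · intro x hx
      have hx0 : (0:ℝ) < x := lt_trans one_pos hx.1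
      have h1 := hstruct x hx0
      rw [le_div_iff₀ hx0]
      nlinarith
    · intro x hx
      have hx0 : (0:ℝ) < x := lt_trans one_pos hx.1
      exact ((hdiff x hx0).hasDerivAt).hasDerivWithinAt
  -- ∫ α₂ μ s / s ≤ α₂ * (ρ * ∫ μ s / s²)
  have mono : ∫ s in (1:ℝ)..ρ, α₂ * μ s / s ≤ ∫ s in (1:ℝ)..ρ, α₂ * ρ * (μ s / s ^ 2) := by
    apply intervalIntegral.integral_mono_on hρ
    · exact (intervalIntegrable_iff_integrableOn_Icc_of_le hρ).2 hφint
    · apply (intervalIntegrable_iff_integrableOn_Icc_of_le hρ).2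
      apply ContinuousOn.integrableOn_compact isCompact_Icc
      apply ContinuousOn.mul continuousOn_const
      apply ContinuousOn.div hcont (continuousOn_pow 2)
      intro x hx
      have : (0:ℝ) < x := lt_of_lt_of_le one_pos hx.1
      positivity
    · intro x hx
      have hx1 : (1:ℝ) ≤ x := hx.1
      have hx0 : (0:ℝ) < x := lt_of_lt_of_le one_pos hx1
      have hμx := hμnn x hx0
      have hxρ : x ≤ ρ := hx.2
      rw [div_le_iff₀ hx0]
      have : α₂ * ρ * (μ x / x ^ 2) * x = α₂ * μ x * (ρ / x) := by
        field_simp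
      rw [this]
      have : α₂ * μ x = α₂ * μ x * 1 := by ring
      nth_rewrite 1 [this]
      apply mul_le_mul_of_nonneg_left _ (by positivity)
      rw [le_div_iff₀ hx0]; linarith
  have hintc : ∫ s in (1:ℝ)..ρ, α₂ * ρ * (μ s / s ^ 2) = α₂ * ρ * ∫ s in (1:ℝ)..ρ, μ s / s ^ 2 := by
    rw [← intervalIntegral.integral_const_mul]
  rw [ge_iff_le, div_le_iff₀ hα₂]
  calc μ ρ - μ 1 ≤ ∫ s in (1:ℝ)..ρ, α₂ * μ s / s := key
    _ ≤ α₂ * ρ * ∫ s in (1:ℝ)..ρ, μ s / s ^ 2 := by rw [← hintc]; exact mono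
    _ = ρ * (∫ s in (1:ℝ)..ρ, μ s / s ^ 2) * α₂ := by ring
end

section
/- Let μ : (0,∞) → ℝ be continuously differentiable with μ(ρ) > 0 and μ'(ρ) > 0 for every ρ > 0, and suppose that ρ μ'(ρ)/μ(ρ) → β as ρ → ∞, where β > 1. Then for every r₀ > 0 there exists c > 0 such that μ'(ρ) ≥ c for all ρ ≥ r₀. -/
open Filter

/-- If `μ` is `C¹` on `(0,∞)`, positive with positive derivative there, and
`ρ μ'(ρ)/μ(ρ) → β > 1` as `ρ → ∞`, then for every `r₀ > 0` the derivative `μ'` is bounded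
below by a positive constant on `[r₀, ∞)`. -/
theorem stmt19 (μ : ℝ → ℝ) (hμ : ContDiffOn ℝ 1 μ (Set.Ioi 0))
    (hpos : ∀ ρ > (0:ℝ), 0 < μ ρ) (hpos' : ∀ ρ > (0:ℝ), 0 < deriv μ ρ)
    (β : ℝ) (hβ : 1 < β)
    (hlim : Tendsto (fun ρ => ρ * deriv μ ρ / μ ρ) atTop (nhds β)) :
    ∀ r₀ > (0:ℝ), ∃ c > (0:ℝ), ∀ ρ ≥ r₀, c ≤ deriv μ ρ := by
  intro r₀ hr₀
  set δ : ℝ := (β + 1) / 2 with hδdef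
  have hδ1 : 1 ≤ δ := by simp only [hδdef]; linarith
  have hδ0 : 0 < δ := by linarith
  have hδβ : δ < β := by simp only [hδdef]; linarith
  obtain ⟨a, ha⟩ := eventually_atTop.1 (hlim.eventually (eventually_ge_nhds hδβ))
  set R : ℝ := max a r₀ with hRdef
  have hRr₀ : r₀ ≤ R := le_max_right _ _
  have hR0 : 0 < R := lt_of_lt_of_le hr₀ hRr₀
  -- key inequality for ρ ≥ R
  have key : ∀ ρ ≥ R, δ * μ ρ ≤ ρ * deriv μ ρ := by
    intro ρ hρ
    have hρ0 : 0 < ρ := lt_of_lt_of_le hR0 hρ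
    have := ha ρ (le_trans (le_max_left a r₀) hρ)
    have hμρ := hpos ρ hρ0
    rw [le_div_iff₀ hμρ] at this
    linarith
  -- g = log μ - log is monotone on [R, ∞)
  set g : ℝ → ℝ := fun ρ => Real.log (μ ρ) - Real.log ρ with hgdef
  have hd : ∀ ρ ∈ Set.Ioi (0:ℝ), HasDerivAt g (deriv μ ρ / μ ρ - ρ⁻¹) ρ := by
    intro ρ hρ
    have hμd : HasDerivAt μ (deriv μ ρ) ρ :=
      ((hμ.differentiableOn one_ne_zero).differentiableAt (Ioi_mem_nhds hρ)).hasDerivAt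
    exact (hμd.log (hpos ρ hρ).ne').sub (Real.hasDerivAt_log (ne_of_gt hρ))
  have hsub : Set.Ici R ⊆ Set.Ioi (0:ℝ) := fun x hx => lt_of_lt_of_le hR0 hx
  have hmono : MonotoneOn g (Set.Ici R) := by
    have hint : interior (Set.Ici R) = Set.Ioi R := interior_Ici
    apply monotoneOn_of_deriv_nonneg (convex_Ici R)
    · intro x hx
      exact ((hd x (hsub hx)).continuousAt).continuousWithinAt
    · rw [hint]
      intro x hx
      exact ((hd x (hsub (Set.mem_Ici.2 (le_of_lt hx)))).differentiableAt).differentiableWithinAt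
    · rw [hint]
      intro x hx
      have hx0 : 0 < x := lt_of_lt_of_le hR0 (le_of_lt hx)
      have hμx := hpos x hx0
      rw [(hd x hx0).deriv, sub_nonneg, inv_le_iff_one_le_mul₀' hx0]
      have hk := key x (le_of_lt hx)
      rw [mul_div_assoc', le_div_iff₀ hμx]
      nlinarith
  -- hence μ ρ / ρ ≥ μ R / R for ρ ≥ R
  have hratio : ∀ ρ ≥ R, μ R / R ≤ μ ρ / ρ := by
    intro ρ hρ
    have hρ0 : 0 < ρ := lt_of_lt_of_le hR0 hρ
    have hg := hmono (Set.self_mem_Ici) (Set.mem_Ici.2 hρ) hρ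
    have h1 : Real.log (μ R / R) ≤ Real.log (μ ρ / ρ) := by
      rw [Real.log_div (hpos R hR0).ne' (ne_of_gt hR0),
        Real.log_div (hpos ρ hρ0).ne' (ne_of_gt hρ0)]
      exact hg
    exact (Real.log_le_log_iff (div_pos (hpos R hR0) hR0) (div_pos (hpos ρ hρ0) hρ0)).1 h1
  set c₁ : ℝ := δ * (μ R / R) with hc₁def
  have hc₁pos : 0 < c₁ := mul_pos hδ0 (div_pos (hpos R hR0) hR0)
  have htail : ∀ ρ ≥ R, c₁ ≤ deriv μ ρ := by
    intro ρ hρ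
    have hρ0 : 0 < ρ := lt_of_lt_of_le hR0 hρ
    have hk := key ρ hρ
    have hr := hratio ρ hρ
    have : δ * (μ ρ / ρ) ≤ deriv μ ρ := by
      rw [mul_div_assoc'] at *
      rw [div_le_iff₀ hρ0]
      nlinarith
    calc c₁ ≤ δ * (μ ρ / ρ) := by
          exact mul_le_mul_of_nonneg_left hr (le_of_lt hδ0)
      _ ≤ deriv μ ρ := this
  -- compact part [r₀, R]
  have hIcc : Set.Icc r₀ R ⊆ Set.Ioi (0:ℝ) := fun x hx => lt_of_lt_of_le hr₀ hx.1
  have hcont : ContinuousOn (deriv μ) (Set.Icc r₀ R) :=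
    (hμ.continuousOn_deriv_of_isOpen isOpen_Ioi le_rfl).mono hIcc
  obtain ⟨x₀, hx₀, hmin⟩ := isCompact_Icc.exists_isMinOn ⟨r₀, by
    exact Set.mem_Icc.2 ⟨le_rfl, hRr₀⟩⟩ hcont
  have hx₀pos : 0 < deriv μ x₀ := hpos' x₀ (hIcc hx₀)
  refine ⟨min c₁ (deriv μ x₀), lt_min hc₁pos hx₀pos, ?_⟩
  intro ρ hρ
  rcases le_total ρ R with h | h
  · exact le_trans (min_le_right _ _) (hmin (Set.mem_Icc.2 ⟨hρ, h⟩))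
  · exact le_trans (min_le_left _ _) (htail ρ h)
end
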